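/- Fix locations q,q' of A and regions r,r' with respect to the constants a_0 < … < a_n < a_{n+1} = +∞ (regions are the singletons {a_i} and the open intervals (a_i,a_{i+1})), and assume each a_i (i ≤ n) is an integral multiple of 1/g for some positive integer g that is a power of C. Then for x ∈ r, the set of costs of paths in TTS_A going from (q,x) to some state (q',β) with β ∈ r' is of the form ⋃_{m∈ℕ} ⟨α_m − β_m·x, α'_m − β'_m·x⟩ (each term an interval, possibly with β_m = 0 and/or β'_m = 0 and/or α'_m = +∞), where every α_m and α'_m is an integral multiple of 1/g or +∞, and every β_m and β'_m is either 0 or the cost rate of some location of A. Moreover, if r = (a_n,+∞), then β_m = β'_m = 0 for all m. -/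

import Mathlib

/-! ## One-clock priced timed automata: common definitions -/

/-- Comparison operators used in clock constraints and cost constraints. -/
inductive Cmp
  | lt | le | eq | ge | gt
  deriving DecidableEq

/-- Satisfaction of `x ∼ c`. -/
def Cmp.sat : Cmp → ℝ → ℝ → Prop
  | .lt, x, c => x < c
  | .le, x, c => x ≤ c
  | .eq, x, c => x = c
  | .ge, x, c => c ≤ x
  | .gt, x, c => c < x

/-- A guard (clock constraint) is a finite conjunction of constraints `x ∼ c`, `c ∈ ℕ`. -/
abbrev PGuard := List (Cmp × ℕ)

/-- A clock value satisfies a guard if it satisfies all its atomic constraints. -/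
def PGuard.sat (g : PGuard) (x : ℝ) : Prop := ∀ p ∈ g, Cmp.sat p.1 x (p.2 : ℝ)

/-- A transition of a one-clock priced timed automaton: source, guard, reset set
(`reset = true` iff the clock is reset), target, and discrete cost. -/
structure PTrans (Q : Type) where
  src : Q
  guard : PGuard
  reset : Bool
  tgt : Q
  dcost : ℕ

/-- A one-clock priced timed automaton with a single cost function:
a finite set `Q` of locations, an initial location, a finite set of transitions,
invariants, and a cost rate for each location (discrete costs are on transitions). -/
structure PTA (Q : Type) [Fintype Q] where
  init : Q
  E : Set (PTrans Q)
  finE : E.Finite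
  Inv : Q → PGuard
  rate : Q → ℕ

variable {Q : Type} [Fintype Q]

/-- A delay move `(q,v) → (q,v+t)` of cost `t · rate q`, allowed if the invariant
holds throughout. -/
def DelayMove (A : PTA Q) (s : Q × ℝ) (c : ℝ) (s' : Q × ℝ) : Prop :=
  ∃ t : ℝ, 0 ≤ t ∧ s' = (s.1, s.2 + t) ∧ c = t * (A.rate s.1 : ℝ) ∧
    ∀ t' : ℝ, 0 ≤ t' → t' ≤ t → PGuard.sat (A.Inv s.1) (s.2 + t')

/-- A discrete move via a transition of `A`, of cost the discrete cost of the transition. -/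
def DiscMove (A : PTA Q) (s : Q × ℝ) (c : ℝ) (s' : Q × ℝ) : Prop :=
  ∃ e ∈ A.E, e.src = s.1 ∧ e.tgt = s'.1 ∧ PGuard.sat e.guard s.2 ∧
    s'.2 = (if e.reset then 0 else s.2) ∧ PGuard.sat (A.Inv e.tgt) s'.2 ∧ c = (e.dcost : ℝ)

/-- A simple move of the timed transition system `TTS_A`. -/
def PMove (A : PTA Q) (s : Q × ℝ) (c : ℝ) (s' : Q × ℝ) : Prop :=
  DelayMove A s c s' ∨ DiscMove A s c s'

/-- `PPath A s c s'`: there is a path (finite sequence of simple moves) in `TTS_A`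
from `s` to `s'` of total cost `c`. -/
inductive PPath (A : PTA Q) : (Q × ℝ) → ℝ → (Q × ℝ) → Prop
  | refl (s : Q × ℝ) : PPath A s 0 s
  | step {s s' s'' : Q × ℝ} {c c' : ℝ} :
      PMove A s c s' → PPath A s' c' s'' → PPath A s (c + c') s''

/-- Reachability in `TTS_A` (notation `⇝*` in the paper). -/
def PReach (A : PTA Q) (s s' : Q × ℝ) : Prop := ∃ c : ℝ, PPath A s c s'

/-- A mixed move: a delay move followed by a discrete move. -/
def MixedMove (A : PTA Q) (s : Q × ℝ) (c : ℝ) (s' : Q × ℝ) : Prop :=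
  ∃ (c₁ c₂ : ℝ) (m : Q × ℝ), DelayMove A s c₁ m ∧ DiscMove A m c₂ s' ∧ c = c₁ + c₂

/-- A priced timed automaton is non-blocking. -/
def NonBlocking (A : PTA Q) : Prop :=
  ∀ (q : Q) (v : ℝ), 0 ≤ v → ∃ (c : ℝ) (s' : Q × ℝ), MixedMove A (q, v) c s'

/-- The constants appearing in the clock constraints (guards and invariants) of `A`. -/
def PTA.consts (A : PTA Q) : Set ℕ :=
  {c | (∃ e ∈ A.E, ∃ p ∈ e.guard, p.2 = c) ∨ ∃ q : Q, ∃ p ∈ A.Inv q, p.2 = c}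

/-- The lcm of all positive cost rates labeling a location of `A`. -/
def posLcm (A : PTA Q) : ℕ :=
  Finset.lcm (Finset.univ.filter fun q => 0 < A.rate q) A.rate

/-! ## Regions and intervals -/

/-- The regions determined by the constants `a 0 < a 1 < … < a n` (with `a (n+1) = +∞`):
the singletons `{a i}`, the open intervals `(a i, a (i+1))`, and `(a n, +∞)`. -/
def Regions (a : ℕ → ℝ) (n : ℕ) : Set (Set ℝ) :=
  {r | (∃ i ≤ n, r = {a i}) ∨ (∃ i < n, r = Set.Ioo (a i) (a (i + 1))) ∨ r = Set.Ioi (a n)}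

/-- Shapes of intervals: closed/open at each end, `ci`/`oi` being right-unbounded. -/
inductive IShape
  | cc | co | oc | oo | ci | oi
  deriving DecidableEq

/-- The interval of the given shape with the given (left, right) endpoints
(the right endpoint is ignored for the right-unbounded shapes `ci` and `oi`). -/
def mkInterval : IShape → ℝ → ℝ → Set ℝ
  | .cc, l, r => Set.Icc l r
  | .co, l, r => Set.Ico l r
  | .oc, l, r => Set.Ioc l r
  | .oo, l, r => Set.Ioo l r
  | .ci, l, _ => Set.Ici l
  | .oi, l, _ => Set.Ioi l

namespace S4


/-- flagged comparison: closed (≤) if `b`, open (<) otherwise -/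
def cmpB (b : Bool) (u v : ℝ) : Prop := if b then u ≤ v else u < v

lemma cmpB_le {b : Bool} {u v : ℝ} (h : cmpB b u v) : u ≤ v := by
  cases b <;> simp [cmpB] at h <;> linarith

lemma cmpB_of_lt {b : Bool} {u v : ℝ} (h : u < v) : cmpB b u v := by
  cases b <;> simp [cmpB] <;> linarith

lemma cmpB_trans_le {b : Bool} {u v w : ℝ} (h : cmpB b u v) (h2 : v ≤ w) : cmpB b u w := by
  cases b <;> simp [cmpB] at * <;> linarith

lemma le_cmpB_trans {b : Bool} {u v w : ℝ} (h : u ≤ v) (h2 : cmpB b v w) : cmpB b u w := by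
  cases b <;> simp [cmpB] at * <;> linarith

lemma cmpB_refl_true {u : ℝ} : cmpB true u u := le_refl u

lemma cmpB_congr {b : Bool} {u u' v v' : ℝ} (hu : u = u') (hv : v = v')
    (h : cmpB b u v) : cmpB b u' v' := hu ▸ hv ▸ h

/-- interval data: lower endpoint `la - lb * w`, flag `bl` (closed?),
upper part optional `(p.1 - p.2 * w)` with flag `bh`. -/
structure ID where
  la : ℝ
  lb : ℝ
  bl : Bool
  hi : Option (ℝ × ℝ)
  bh : Bool

def evalI (d : ID) (w : ℝ) : Set ℝ :=
  {z | cmpB d.bl (d.la - d.lb * w) z ∧ ∀ p ∈ d.hi, cmpB d.bh z (p.1 - p.2 * w)}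

/-- order convexity -/
def OC (U : Set ℝ) : Prop := ∀ z₁ ∈ U, ∀ z₂ ∈ U, ∀ z, z₁ ≤ z → z ≤ z₂ → z ∈ U

def LM (U : Set ℝ) (v : ℝ) (b : Bool) : Prop :=
  (∀ z ∈ U, cmpB b v z) ∧ (if b then v ∈ U else ∀ ε > 0, ∃ z ∈ U, z < v + ε)

def UMub (U : Set ℝ) (v : ℝ) (b : Bool) : Prop :=
  (∀ z ∈ U, cmpB b z v) ∧ (if b then v ∈ U else ∀ ε > 0, ∃ z ∈ U, v - ε < z)

def UM (U : Set ℝ) (o : Option (ℝ × ℝ)) (b : Bool) (w : ℝ) : Prop :=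
  match o with
  | none => ∀ M : ℝ, ∃ z ∈ U, M < z
  | some p => UMub U (p.1 - p.2 * w) b

lemma sandwich {U : Set ℝ} (hOC : OC U) (d : ID) (w : ℝ)
    (hl : LM U (d.la - d.lb * w) d.bl) (hu : UM U d.hi d.bh w) :
    U = evalI d w := by
  have hex_le : ∀ z : ℝ, cmpB d.bl (d.la - d.lb * w) z → ∃ z₁ ∈ U, z₁ ≤ z := by
    intro z hz
    cases hbl : d.bl with
    | true =>
      refine ⟨d.la - d.lb * w, ?_, cmpB_le (hbl ▸ hz)⟩
      have := hl.2; rw [hbl] at this; simpa using this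
    | false =>
      have hlt : d.la - d.lb * w < z := by have := hz; rw [hbl] at this; exact this
      have h2 := hl.2; rw [hbl] at h2; simp at h2
      obtain ⟨z₁, hz₁, hlt₁⟩ := h2 (z - (d.la - d.lb * w)) (by linarith)
      exact ⟨z₁, hz₁, by linarith⟩
  have hex_ge : ∀ z : ℝ, (∀ p ∈ d.hi, cmpB d.bh z (p.1 - p.2 * w)) → ∃ z₂ ∈ U, z ≤ z₂ := by
    intro z hz
    cases hd : d.hi with
    | none =>
      have h2 : ∀ M : ℝ, ∃ z ∈ U, M < z := by
        have := hu; rw [hd] at this; exact this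
      obtain ⟨z₂, hz₂, hlt⟩ := h2 z
      exact ⟨z₂, hz₂, le_of_lt hlt⟩
    | some p =>
      have hub : UMub U (p.1 - p.2 * w) d.bh := by have := hu; rw [hd] at this; exact this
      have hzp : cmpB d.bh z (p.1 - p.2 * w) := hz p (by simp [hd])
      cases hbh : d.bh with
      | true =>
        refine ⟨p.1 - p.2 * w, ?_, cmpB_le (hbh ▸ hzp)⟩
        have := hub.2; rw [hbh] at this; simpa using this
      | false =>
        have hlt : z < p.1 - p.2 * w := by have := hzp; rw [hbh] at this; exact this
        have h2 := hub.2; rw [hbh] at h2; simp at h2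
        obtain ⟨z₂, hz₂, hlt₂⟩ := h2 ((p.1 - p.2 * w) - z) (by linarith)
        exact ⟨z₂, hz₂, by linarith⟩
  ext z
  constructor
  · intro hz
    refine ⟨hl.1 z hz, ?_⟩
    intro p hp
    cases hd : d.hi with
    | none => simp [hd] at hp
    | some p' =>
      rw [hd] at hp
      have hpp : p' = p := by simpa using hp
      cases hpp
      have hub : UMub U (p.1 - p.2 * w) d.bh := by have := hu; rw [hd] at this; exact this
      exact hub.1 z hz
  · rintro ⟨hlo, hhi⟩
    obtain ⟨z₁, hz₁, h₁⟩ := hex_le z hlo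
    obtain ⟨z₂, hz₂, h₂⟩ := hex_ge z hhi
    exact hOC z₁ hz₁ z₂ hz₂ z h₁ h₂


/-- set of costs obtainable by delaying (rate `ρ`) from clock `w` to some `t ∈ W`,
then continuing with a cost in `evalI d₂ t`. -/
def Uker (ρ w : ℝ) (W : Set ℝ) (d₂ : ID) : Set ℝ :=
  {z | ∃ t ∈ W, z - ρ * (t - w) ∈ evalI d₂ t}

lemma mem_Uker_of {ρ w : ℝ} {W : Set ℝ} {d₂ : ID} {t y : ℝ}
    (ht : t ∈ W) (hy : y ∈ evalI d₂ t) : y + ρ * (t - w) ∈ Uker ρ w W d₂ := by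
  refine ⟨t, ht, ?_⟩
  have : y + ρ * (t - w) - ρ * (t - w) = y := by ring
  rw [this]; exact hy

lemma evalI_convex (d₂ : ID) {l m : ℝ} (hl : 0 < l) (hm : 0 < m) (hs : l + m = 1)
    {u₁ u₂ y₁ y₂ : ℝ} (h₁ : y₁ ∈ evalI d₂ u₁) (h₂ : y₂ ∈ evalI d₂ u₂) :
    l * y₁ + m * y₂ ∈ evalI d₂ (l * u₁ + m * u₂) := by
  obtain ⟨hlo₁, hhi₁⟩ := h₁
  obtain ⟨hlo₂, hhi₂⟩ := h₂
  constructor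
  · have key : d₂.la - d₂.lb * (l * u₁ + m * u₂)
        = l * (d₂.la - d₂.lb * u₁) + m * (d₂.la - d₂.lb * u₂) := by
      have h1 : d₂.la * (l + m) = d₂.la * 1 := by rw [hs]
      nlinarith [h1]
    rw [key]
    cases hb : d₂.bl with
    | true =>
      have e₁ : d₂.la - d₂.lb * u₁ ≤ y₁ := by have := hlo₁; rw [hb] at this; exact this
      have e₂ : d₂.la - d₂.lb * u₂ ≤ y₂ := by have := hlo₂; rw [hb] at this; exact this
      show _ ≤ _
      nlinarith
    | false =>
      have e₁ : d₂.la - d₂.lb * u₁ < y₁ := by have := hlo₁; rw [hb] at this; exact this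
      have e₂ : d₂.la - d₂.lb * u₂ < y₂ := by have := hlo₂; rw [hb] at this; exact this
      show _ < _
      nlinarith
  · intro p hp
    have e₁ := hhi₁ p hp
    have e₂ := hhi₂ p hp
    have key : p.1 - p.2 * (l * u₁ + m * u₂)
        = l * (p.1 - p.2 * u₁) + m * (p.1 - p.2 * u₂) := by
      have h1 : p.1 * (l + m) = p.1 * 1 := by rw [hs]
      nlinarith [h1]
    rw [key]
    cases hb : d₂.bh with
    | true =>
      have f₁ : y₁ ≤ p.1 - p.2 * u₁ := by have := e₁; rw [hb] at this; exact this
      have f₂ : y₂ ≤ p.1 - p.2 * u₂ := by have := e₂; rw [hb] at this; exact this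
      show _ ≤ _
      nlinarith
    | false =>
      have f₁ : y₁ < p.1 - p.2 * u₁ := by have := e₁; rw [hb] at this; exact this
      have f₂ : y₂ < p.1 - p.2 * u₂ := by have := e₂; rw [hb] at this; exact this
      show _ < _
      nlinarith

lemma Uker_OC (ρ w : ℝ) {W : Set ℝ}
    (hW : ∀ t₁ ∈ W, ∀ t₂ ∈ W, ∀ t, t₁ ≤ t → t ≤ t₂ → t ∈ W) (d₂ : ID) :
    OC (Uker ρ w W d₂) := by
  rintro z₁ ⟨t₁, ht₁, hy₁⟩ z₂ ⟨t₂, ht₂, hy₂⟩ z hz₁ hz₂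
  rcases eq_or_lt_of_le hz₁ with rfl | hz₁'
  · exact ⟨t₁, ht₁, hy₁⟩
  rcases eq_or_lt_of_le hz₂ with rfl | hz₂'
  · exact ⟨t₂, ht₂, hy₂⟩
  set l : ℝ := (z₂ - z) / (z₂ - z₁) with hldef
  set m : ℝ := (z - z₁) / (z₂ - z₁) with hmdef
  have hden : (0:ℝ) < z₂ - z₁ := by linarith
  have hl : 0 < l := div_pos (by linarith) hden
  have hm : 0 < m := div_pos (by linarith) hden
  have hs : l + m = 1 := by
    rw [hldef, hmdef]; field_simp; ring
  have hz : z = l * z₁ + m * z₂ := by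
    rw [hldef, hmdef]; field_simp; ring
  set t : ℝ := l * t₁ + m * t₂ with htdef
  have hml : t - t₁ = m * (t₂ - t₁) := by rw [htdef]; linear_combination t₁ * hs
  have hml2 : t₂ - t = l * (t₂ - t₁) := by rw [htdef]; linear_combination (-t₂) * hs
  have htW : t ∈ W := by
    rcases le_total t₁ t₂ with h | h
    · exact hW t₁ ht₁ t₂ ht₂ t
        (by nlinarith [mul_nonneg hm.le (sub_nonneg.mpr h)])
        (by nlinarith [mul_nonneg hl.le (sub_nonneg.mpr h)])
    · exact hW t₂ ht₂ t₁ ht₁ t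
        (by nlinarith [mul_nonpos_of_nonneg_of_nonpos hl.le (sub_nonpos.mpr h)])
        (by nlinarith [mul_nonpos_of_nonneg_of_nonpos hm.le (sub_nonpos.mpr h)])
  refine ⟨t, htW, ?_⟩
  have key : z - ρ * (t - w)
      = l * (z₁ - ρ * (t₁ - w)) + m * (z₂ - ρ * (t₂ - w)) := by
    rw [hz, htdef]
    linear_combination (-(ρ * w)) * hs
  rw [key]
  exact evalI_convex d₂ hl hm hs hy₁ hy₂

lemma LM_Uker {ρ w : ℝ} {W : Set ℝ} {d₂ : ID} {v : ℝ} {b : Bool}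
    (hsl : ∀ t ∈ W, (evalI d₂ t).Nonempty)
    (hbd : ∀ t ∈ W, v ≤ (ρ - d₂.lb) * t + (d₂.la - ρ * w))
    (hb : if b then (d₂.bl = true ∧ ∃ t ∈ W, (ρ - d₂.lb) * t + (d₂.la - ρ * w) = v)
          else ((∀ ε > 0, ∃ t ∈ W, (ρ - d₂.lb) * t + (d₂.la - ρ * w) < v + ε) ∧
                (d₂.bl = true → ∀ t ∈ W, v < (ρ - d₂.lb) * t + (d₂.la - ρ * w)))) :
    LM (Uker ρ w W d₂) v b := by
  have hLrw : ∀ t z : ℝ, cmpB d₂.bl (d₂.la - d₂.lb * t) (z - ρ * (t - w)) ↔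
      cmpB d₂.bl ((ρ - d₂.lb) * t + (d₂.la - ρ * w)) z := by
    intro t z
    cases hbl : d₂.bl <;> simp [cmpB] <;> constructor <;> intro h <;> linarith
  constructor
  · rintro z ⟨t, ht, hmem⟩
    have hlo := hmem.1
    rw [hLrw t z] at hlo
    cases hbb : b with
    | true =>
      show v ≤ z
      exact le_trans (hbd t ht) (cmpB_le hlo)
    | false =>
      show v < z
      rw [hbb] at hb
      cases hbl : d₂.bl with
      | true =>
        have := hb.2 hbl t ht
        have h2 : (ρ - d₂.lb) * t + (d₂.la - ρ * w) ≤ z := cmpB_le hlo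
        linarith
      | false =>
        have h2 : (ρ - d₂.lb) * t + (d₂.la - ρ * w) < z := by
          have := hlo; rw [hbl] at this; exact this
        have := hbd t ht
        linarith
  · cases hbb : b with
    | true =>
      simp only [if_true]
      rw [hbb] at hb
      obtain ⟨hbl, t, ht, hLt⟩ := hb
      obtain ⟨y₀, hy₀⟩ := hsl t ht
      refine ⟨t, ht, ?_, ?_⟩
      · rw [hLrw t v, hLt, hbl]
        exact le_refl v
      · intro p hp
        have h1 : v - ρ * (t - w) ≤ y₀ := by
          have := cmpB_le hy₀.1
          have h2 : d₂.la - d₂.lb * t = v - ρ * (t - w) := by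
            rw [← hLt]; ring
          linarith
        exact le_cmpB_trans h1 (hy₀.2 p hp)
    | false =>
      simp only [Bool.false_eq_true, if_false]
      rw [hbb] at hb
      intro ε hε
      obtain ⟨t, ht, hLt⟩ := hb.1 ε hε
      obtain ⟨y₀, hy₀⟩ := hsl t ht
      set Lt := (ρ - d₂.lb) * t + (d₂.la - ρ * w) with hLtd
      set z₀ := y₀ + ρ * (t - w) with hz₀
      have hz₀U : cmpB d₂.bl Lt z₀ := by
        rw [← hLrw t z₀]
        have : z₀ - ρ * (t - w) = y₀ := by rw [hz₀]; ring
        rw [this]; exact hy₀.1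
      set z := min z₀ ((Lt + (v + ε)) / 2) with hzd
      refine ⟨z, ⟨t, ht, ?_, ?_⟩, ?_⟩
      · rw [hLrw t z]
        rcases min_cases z₀ ((Lt + (v + ε)) / 2) with ⟨hmin, _⟩ | ⟨hmin, _⟩
        · rw [hzd, hmin]; exact hz₀U
        · rw [hzd, hmin]; exact cmpB_of_lt (by linarith)
      · intro p hp
        have hzle : z - ρ * (t - w) ≤ y₀ := by
          have : z ≤ z₀ := min_le_left _ _
          rw [hz₀] at this; linarith
        exact le_cmpB_trans hzle (hy₀.2 p hp)
      · have : z ≤ (Lt + (v + ε)) / 2 := min_le_right _ _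
        linarith

lemma hHrw {ρ w : ℝ} {d₂ : ID} {p : ℝ × ℝ} (t z : ℝ) :
    cmpB d₂.bh (z - ρ * (t - w)) (p.1 - p.2 * t) ↔
      cmpB d₂.bh z ((ρ - p.2) * t + (p.1 - ρ * w)) := by
  cases hbh : d₂.bh <;> simp [cmpB] <;> constructor <;> intro h <;> linarith

lemma UMub_Uker {ρ w : ℝ} {W : Set ℝ} {d₂ : ID} {p : ℝ × ℝ} (hp : d₂.hi = some p)
    {v' : ℝ} {b : Bool}
    (hsl : ∀ t ∈ W, (evalI d₂ t).Nonempty)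
    (hbd : ∀ t ∈ W, (ρ - p.2) * t + (p.1 - ρ * w) ≤ v')
    (hb : if b then (d₂.bh = true ∧ ∃ t ∈ W, (ρ - p.2) * t + (p.1 - ρ * w) = v')
          else ((∀ ε > 0, ∃ t ∈ W, v' - ε < (ρ - p.2) * t + (p.1 - ρ * w)) ∧
                (d₂.bh = true → ∀ t ∈ W, (ρ - p.2) * t + (p.1 - ρ * w) < v'))) :
    UMub (Uker ρ w W d₂) v' b := by
  have hLrw : ∀ t z : ℝ, cmpB d₂.bl (d₂.la - d₂.lb * t) (z - ρ * (t - w)) ↔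
      cmpB d₂.bl ((ρ - d₂.lb) * t + (d₂.la - ρ * w)) z := by
    intro t z
    cases hbl : d₂.bl <;> simp [cmpB] <;> constructor <;> intro h <;> linarith
  constructor
  · rintro z ⟨t, ht, hmem⟩
    have hhi : cmpB d₂.bh z ((ρ - p.2) * t + (p.1 - ρ * w)) := by
      rw [← hHrw t z]
      exact hmem.2 p (by simp [hp])
    cases hbb : b with
    | true =>
      show z ≤ v'
      exact le_trans (cmpB_le hhi) (hbd t ht)
    | false =>
      show z < v'
      rw [hbb] at hb
      cases hbh : d₂.bh with
      | true =>
        have h1 := hb.2 hbh t ht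
        have h2 : z ≤ (ρ - p.2) * t + (p.1 - ρ * w) := cmpB_le hhi
        linarith
      | false =>
        have h2 : z < (ρ - p.2) * t + (p.1 - ρ * w) := by
          have := hhi; rw [hbh] at this; exact this
        have := hbd t ht
        linarith
  · cases hbb : b with
    | true =>
      simp only [if_true]
      rw [hbb] at hb
      obtain ⟨hbh, t, ht, hHt⟩ := hb
      obtain ⟨y₀, hy₀⟩ := hsl t ht
      refine ⟨t, ht, ?_, ?_⟩
      · rw [hLrw t v']
        have h1 : y₀ ≤ p.1 - p.2 * t := by
          have := hy₀.2 p (by simp [hp])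
          rw [hbh] at this; exact this
        have h2 : p.1 - p.2 * t = v' - ρ * (t - w) := by rw [← hHt]; ring
        have h3 : y₀ + ρ * (t - w) ≤ v' := by rw [h2] at h1; linarith
        have h4 : cmpB d₂.bl ((ρ - d₂.lb) * t + (d₂.la - ρ * w)) (y₀ + ρ * (t - w)) := by
          rw [← hLrw t (y₀ + ρ * (t - w))]
          have : y₀ + ρ * (t - w) - ρ * (t - w) = y₀ := by ring
          rw [this]; exact hy₀.1
        exact cmpB_trans_le h4 h3
      · intro p' hp'
        have hpp : p' = p := by rw [hp] at hp'; simpa using hp'.symm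
        subst hpp
        rw [hHrw t v', hHt, hbh]
        exact le_refl v'
    | false =>
      simp only [Bool.false_eq_true, if_false]
      rw [hbb] at hb
      intro ε hε
      obtain ⟨t, ht, hHt⟩ := hb.1 ε hε
      obtain ⟨y₀, hy₀⟩ := hsl t ht
      set Ht := (ρ - p.2) * t + (p.1 - ρ * w) with hHtd
      set z₀ := y₀ + ρ * (t - w) with hz₀
      have hz₀hi : cmpB d₂.bh z₀ Ht := by
        rw [← hHrw t z₀]
        have : z₀ - ρ * (t - w) = y₀ := by rw [hz₀]; ring
        rw [this]; exact hy₀.2 p (by simp [hp])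
      set z := max z₀ ((Ht + (v' - ε)) / 2) with hzd
      refine ⟨z, ⟨t, ht, ?_, ?_⟩, ?_⟩
      · rw [hLrw t z]
        have h4 : cmpB d₂.bl ((ρ - d₂.lb) * t + (d₂.la - ρ * w)) z₀ := by
          rw [← hLrw t z₀]
          have : z₀ - ρ * (t - w) = y₀ := by rw [hz₀]; ring
          rw [this]; exact hy₀.1
        exact cmpB_trans_le h4 (le_max_left _ _)
      · intro p' hp'
        have hpp : p' = p := by rw [hp] at hp'; simpa using hp'.symm
        subst hpp
        rw [hHrw t z]
        rcases max_cases z₀ ((Ht + (v' - ε)) / 2) with ⟨hmax, _⟩ | ⟨hmax, _⟩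
        · rw [hzd, hmax]; exact hz₀hi
        · rw [hzd, hmax]; exact cmpB_of_lt (by linarith)
      · have : (Ht + (v' - ε)) / 2 ≤ z := le_max_right _ _
        linarith

lemma UMnone_noub {ρ w : ℝ} {W : Set ℝ} {d₂ : ID} (hno : d₂.hi = none)
    (hW : W.Nonempty) : ∀ M : ℝ, ∃ z ∈ Uker ρ w W d₂, M < z := by
  intro M
  obtain ⟨t, ht⟩ := hW
  set z := max ((ρ - d₂.lb) * t + (d₂.la - ρ * w)) M + 1 with hzd
  refine ⟨z, ⟨t, ht, ?_, ?_⟩, ?_⟩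
  · have h1 : (ρ - d₂.lb) * t + (d₂.la - ρ * w) < z := by
      have := le_max_left ((ρ - d₂.lb) * t + (d₂.la - ρ * w)) M
      linarith
    have : d₂.la - d₂.lb * t < z - ρ * (t - w) := by linarith
    exact cmpB_of_lt this
  · intro p hp; rw [hno] at hp; simp at hp
  · have := le_max_right ((ρ - d₂.lb) * t + (d₂.la - ρ * w)) M
    linarith

lemma UMnone_ub {ρ w : ℝ} {W : Set ℝ} {d₂ : ID} {p : ℝ × ℝ} (hp : d₂.hi = some p)
    (hsl : ∀ t ∈ W, (evalI d₂ t).Nonempty)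
    (hyp : ∀ M : ℝ, ∃ t ∈ W, M < (ρ - p.2) * t + (p.1 - ρ * w)) :
    ∀ M : ℝ, ∃ z ∈ Uker ρ w W d₂, M < z := by
  intro M
  obtain ⟨t, ht, hHt⟩ := hyp M
  obtain ⟨y₀, hy₀⟩ := hsl t ht
  set Ht := (ρ - p.2) * t + (p.1 - ρ * w) with hHtd
  set z₀ := y₀ + ρ * (t - w) with hz₀
  have hz₀mem : z₀ ∈ Uker ρ w W d₂ := mem_Uker_of ht hy₀
  by_cases hMz : M < z₀
  · exact ⟨z₀, hz₀mem, hMz⟩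
  · push_neg at hMz
    have hz₀Ht : z₀ ≤ Ht := by
      have h := hy₀.2 p (by simp [hp])
      have h2 := cmpB_le h
      have : z₀ - ρ * (t - w) = y₀ := by rw [hz₀]; ring
      rw [hHtd]
      have h3 : y₀ ≤ p.1 - p.2 * t := h2
      rw [hz₀]; linarith
    set z := (M + Ht) / 2 with hzd
    have hMHt : M < Ht := hHt
    refine ⟨z, ⟨t, ht, ?_, ?_⟩, ?_⟩
    · have hz₀lo := hy₀.1
      have hle : z₀ ≤ z := by
        rw [hzd]; linarith
      have h4 : cmpB d₂.bl (d₂.la - d₂.lb * t) (z₀ - ρ * (t - w)) := by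
        have : z₀ - ρ * (t - w) = y₀ := by rw [hz₀]; ring
        rw [this]; exact hz₀lo
      exact cmpB_trans_le h4 (by linarith)
    · intro p' hp'
      have hpp : p' = p := by rw [hp] at hp'; simpa using hp'.symm
      rw [hpp]
      have hzlt : z < Ht := by rw [hzd]; linarith
      have h5 : z - ρ * (t - w) < p.1 - p.2 * t := by
        rw [hHtd] at hzlt; linarith
      exact cmpB_of_lt h5
    · rw [hzd]; linarith

/-- `W` has points arbitrarily close to `t₀` -/
def approaches (W : Set ℝ) (t₀ : ℝ) : Prop := ∀ δ > 0, ∃ t ∈ W, |t - t₀| < δ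

lemma approaches_of_mem {W : Set ℝ} {t₀ : ℝ} (h : t₀ ∈ W) : approaches W t₀ :=
  fun δ hδ => ⟨t₀, h, by simpa using hδ⟩

lemma approaches_Ico_right {w u : ℝ} (h : w < u) : approaches (Set.Ico w u) u := by
  intro δ hδ
  refine ⟨max w (u - δ / 2), ⟨le_max_left _ _, ?_⟩, ?_⟩
  · rcases max_cases w (u - δ / 2) with ⟨hm, _⟩ | ⟨hm, _⟩ <;> rw [hm] <;> linarith
  · rw [abs_lt]
    constructor
    · have := le_max_right w (u - δ / 2); linarith
    · rcases max_cases w (u - δ / 2) with ⟨hm, _⟩ | ⟨hm, _⟩ <;> rw [hm] <;> linarith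

lemma approaches_Ioo_right {l u : ℝ} (h : l < u) : approaches (Set.Ioo l u) u := by
  intro δ hδ
  refine ⟨max ((l + u) / 2) (u - δ / 2), ⟨?_, ?_⟩, ?_⟩
  · have := le_max_left ((l + u) / 2) (u - δ / 2); linarith
  · rcases max_cases ((l + u) / 2) (u - δ / 2) with ⟨hm, _⟩ | ⟨hm, _⟩ <;> rw [hm] <;> linarith
  · rw [abs_lt]
    constructor
    · have := le_max_right ((l + u) / 2) (u - δ / 2); linarith
    · rcases max_cases ((l + u) / 2) (u - δ / 2) with ⟨hm, _⟩ | ⟨hm, _⟩ <;> rw [hm] <;> linarith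

lemma approaches_Ioo_left {l u : ℝ} (h : l < u) : approaches (Set.Ioo l u) l := by
  intro δ hδ
  refine ⟨min ((l + u) / 2) (l + δ / 2), ⟨?_, ?_⟩, ?_⟩
  · rcases min_cases ((l + u) / 2) (l + δ / 2) with ⟨hm, _⟩ | ⟨hm, _⟩ <;> rw [hm] <;> linarith
  · have := min_le_left ((l + u) / 2) (l + δ / 2); linarith
  · rw [abs_lt]
    constructor
    · rcases min_cases ((l + u) / 2) (l + δ / 2) with ⟨hm, _⟩ | ⟨hm, _⟩ <;> rw [hm] <;> linarith
    · have := min_le_right ((l + u) / 2) (l + δ / 2); linarith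

lemma approaches_Ioi_left {l : ℝ} : approaches (Set.Ioi l) l := by
  intro δ hδ
  refine ⟨l + δ / 2, by simp [Set.mem_Ioi]; linarith, ?_⟩
  rw [abs_lt]; constructor <;> linarith

lemma affApprox {W : Set ℝ} {t₀ : ℝ} (hap : approaches W t₀) (c d : ℝ) :
    ∀ ε > 0, ∃ t ∈ W, c * t + d < c * t₀ + d + ε ∧ c * t₀ + d - ε < c * t + d := by
  intro ε hε
  have hc1 : (0:ℝ) < |c| + 1 := by positivity
  obtain ⟨t, ht, habs⟩ := hap (ε / (|c| + 1)) (div_pos hε hc1)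
  have hb : |c * (t - t₀)| < ε := by
    rw [abs_mul]
    have h3 : |c| * |t - t₀| ≤ |c| * (ε / (|c| + 1)) :=
      mul_le_mul_of_nonneg_left habs.le (abs_nonneg c)
    have h5 : |c| / (|c| + 1) < 1 := by rw [div_lt_one hc1]; linarith
    have h4 : |c| * (ε / (|c| + 1)) < ε := by
      calc |c| * (ε / (|c|+1)) = (|c| / (|c|+1)) * ε := by ring
        _ < 1 * ε := mul_lt_mul_of_pos_right h5 hε
        _ = ε := one_mul ε
    linarith
  rw [abs_lt] at hb
  have e1 : c * (t - t₀) = c * t - c * t₀ := by ring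
  exact ⟨t, ht, by linarith [hb.2], by linarith [hb.1]⟩

lemma affTop {W : Set ℝ} {anchor : ℝ} (hW : ∀ t, anchor ≤ t → t ∈ W)
    {c : ℝ} (hc : 0 < c) (d : ℝ) : ∀ M : ℝ, ∃ t ∈ W, M < c * t + d := by
  intro M
  set t := max anchor ((M + 1 - d) / c) with htd
  refine ⟨t, hW t (le_max_left _ _), ?_⟩
  have h1 : (M + 1 - d) / c ≤ t := le_max_right _ _
  have h2 : M + 1 - d ≤ c * t := by
    rw [div_le_iff₀ hc] at h1; linarith
  linarith

/-! ### Regions -/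

inductive Reg where
  | pt : ℕ → Reg
  | op : ℕ → Reg
  | top : Reg
deriving DecidableEq

def Reg.good (n : ℕ) : Reg → Prop
  | .pt j => j ≤ n
  | .op j => j < n
  | .top => True

def Reg.carr (a : ℕ → ℝ) (n : ℕ) : Reg → Set ℝ
  | .pt j => {a j}
  | .op j => Set.Ioo (a j) (a (j + 1))
  | .top => Set.Ioi (a n)

def Reg.idx (n : ℕ) : Reg → ℕ
  | .pt j => 2 * j
  | .op j => 2 * j + 1
  | .top => 2 * n + 1

section Regions

variable {n : ℕ} {a : ℕ → ℝ}

lemma amono (hmono : ∀ i j : ℕ, i ≤ n → j ≤ n → i < j → a i < a j)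
    {i j : ℕ} (hi : i ≤ n) (hj : j ≤ n) (h : i ≤ j) : a i ≤ a j := by
  rcases eq_or_lt_of_le h with rfl | h'
  · exact le_refl _
  · exact (hmono i j hi hj h').le

lemma regLT (hmono : ∀ i j : ℕ, i ≤ n → j ≤ n → i < j → a i < a j) {r r' : Reg} (hr : r.good n) (hr' : r'.good n)
    (hidx : r.idx n < r'.idx n) :
    ∀ u ∈ r.carr a n, ∀ u' ∈ r'.carr a n, u < u' := by
  intro u hu u' hu'
  cases r with
  | pt j =>
    have hj : j ≤ n := hr
    simp [Reg.carr] at hu; subst hu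
    cases r' with
    | pt j' =>
      have hj' : j' ≤ n := hr'
      simp [Reg.carr] at hu'; subst hu'
      simp [Reg.idx] at hidx
      exact hmono j j' hj hj' (by omega)
    | op j' =>
      have hj' : j' < n := hr'
      obtain ⟨h1, h2⟩ := hu'
      simp [Reg.idx] at hidx
      have : a j ≤ a j' := amono hmono hj (by omega) (by omega)
      linarith
    | top =>
      have : a j ≤ a n := amono hmono hj le_rfl hj
      simp [Reg.carr, Set.mem_Ioi] at hu'
      linarith
  | op j =>
    obtain ⟨h1, h2⟩ := hu
    have hj : j < n := hr
    cases r' with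
    | pt j' =>
      have hj' : j' ≤ n := hr'
      simp [Reg.carr] at hu'; subst hu'
      simp [Reg.idx] at hidx
      have : a (j+1) ≤ a j' := amono hmono (by omega) hj' (by omega)
      linarith
    | op j' =>
      have hj' : j' < n := hr'
      obtain ⟨h1', h2'⟩ := hu'
      simp [Reg.idx] at hidx
      have : a (j+1) ≤ a j' := amono hmono (by omega) (by omega) (by omega)
      linarith
    | top =>
      simp [Reg.carr, Set.mem_Ioi] at hu'
      have : a (j+1) ≤ a n := amono hmono (by omega) le_rfl (by omega)
      linarith
  | top =>
    cases r' with
    | pt j' =>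
      have hj' : j' ≤ n := hr'
      simp [Reg.idx] at hidx; omega
    | op j' =>
      have hj' : j' < n := hr'
      simp [Reg.idx] at hidx
      omega
    | top => simp [Reg.idx] at hidx

lemma reg_idx_inj {r r' : Reg} (hr : r.good n) (hr' : r'.good n)
    (h : r.idx n = r'.idx n) : r = r' := by
  cases r with
  | pt j =>
    have hj : j ≤ n := hr
    cases r' with
    | pt j' => simp [Reg.idx] at h; simp; omega
    | op j' => simp [Reg.idx] at h; omega
    | top => simp [Reg.idx] at h; omega
  | op j =>
    have hj : j < n := hr
    cases r' with
    | pt j' => simp [Reg.idx] at h; omega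
    | op j' => simp [Reg.idx] at h; simp; omega
    | top => simp [Reg.idx] at h; omega
  | top =>
    cases r' with
    | pt j' =>
      have hj' : j' ≤ n := hr'
      simp [Reg.idx] at h; omega
    | op j' =>
      have hj' : j' < n := hr'
      simp [Reg.idx] at h; omega
    | top => rfl

lemma reg_eq_of_mem (hmono : ∀ i j : ℕ, i ≤ n → j ≤ n → i < j → a i < a j) {r r' : Reg} (hr : r.good n) (hr' : r'.good n)
    {u : ℝ} (hu : u ∈ r.carr a n) (hu' : u ∈ r'.carr a n) : r = r' := by
  rcases lt_trichotomy (r.idx n) (r'.idx n) with h | h | h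
  · exact absurd (regLT hmono hr hr' h u hu u hu') (lt_irrefl u)
  · exact reg_idx_inj hr hr' h
  · exact absurd (regLT hmono hr' hr h u hu' u hu) (lt_irrefl u)

lemma reg_nonempty (hmono : ∀ i j : ℕ, i ≤ n → j ≤ n → i < j → a i < a j) {r : Reg} (hr : r.good n) : (r.carr a n).Nonempty := by
  cases r with
  | pt j => exact ⟨a j, rfl⟩
  | op j =>
    have hj : j < n := hr
    have : a j < a (j + 1) := hmono j (j+1) (by omega) (by omega) (by omega)
    exact ⟨(a j + a (j+1)) / 2, by
      simp only [Reg.carr, Set.mem_Ioo]; constructor <;> linarith⟩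
  | top => exact ⟨a n + 1, by simp [Reg.carr, Set.mem_Ioi]⟩

lemma reg_mem_nonneg (hmono : ∀ i j : ℕ, i ≤ n → j ≤ n → i < j → a i < a j) (h0 : a 0 = 0) {r : Reg} (hr : r.good n) {u : ℝ}
    (hu : u ∈ r.carr a n) : 0 ≤ u := by
  cases r with
  | pt j =>
    have hj : j ≤ n := hr
    simp [Reg.carr] at hu; subst hu
    rw [← h0]; exact amono hmono (by omega) hj (by omega)
  | op j =>
    have hj : j < n := hr
    have h1 : a 0 ≤ a j := amono hmono (by omega) (by omega) (by omega)
    have h2 := hu.1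
    rw [h0] at h1
    linarith
  | top =>
    simp [Reg.carr, Set.mem_Ioi] at hu
    have h1 : a 0 ≤ a n := amono hmono (by omega) le_rfl (by omega)
    rw [h0] at h1; linarith

lemma reg_cover (h0 : a 0 = 0) {u : ℝ} (hu : 0 ≤ u) :
    ∃ r : Reg, r.good n ∧ u ∈ r.carr a n := by
  haveI : DecidablePred (fun i : ℕ => a i ≤ u) := Classical.decPred _
  have hP0 : a 0 ≤ u := by rw [h0]; exact hu
  have hi₀n : Nat.findGreatest (fun i : ℕ => a i ≤ u) n ≤ n := Nat.findGreatest_le n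
  have hi₀P : a (Nat.findGreatest (fun i : ℕ => a i ≤ u) n) ≤ u :=
    Nat.findGreatest_spec (P := fun i : ℕ => a i ≤ u) (Nat.zero_le n) hP0
  rcases eq_or_lt_of_le hi₀P with heq | hlt
  · exact ⟨.pt _, hi₀n, by simp [Reg.carr, heq]⟩
  · rcases eq_or_lt_of_le hi₀n with heqn | hi₀n'
    · refine ⟨.top, trivial, ?_⟩
      simp only [Reg.carr, Set.mem_Ioi]
      rw [← heqn]; exact hlt
    · refine ⟨.op _, hi₀n', hlt, ?_⟩
      by_contra hcon
      push_neg at hcon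
      exact Nat.findGreatest_is_greatest (P := fun i : ℕ => a i ≤ u)
        (n := n) (k := Nat.findGreatest (fun i : ℕ => a i ≤ u) n + 1) (by omega) (by omega) hcon

/-- guard satisfaction is region-invariant provided all constants of the guard
are among the `a i`, `i ≤ n`. -/
lemma guard_region_invariant (hmono : ∀ i j : ℕ, i ≤ n → j ≤ n → i < j → a i < a j) {gd : PGuard}
    (hcs : ∀ p ∈ gd, ∃ i ≤ n, a i = (p.2 : ℝ)) {r : Reg} (hr : r.good n)
    {u u' : ℝ} (hu : u ∈ r.carr a n) (hu' : u' ∈ r.carr a n)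
    (hsat : PGuard.sat gd u) : PGuard.sat gd u' := by
  rintro ⟨op, cst⟩ hp
  obtain ⟨i, hin, hai⟩ := hcs _ hp
  have hs := hsat _ hp
  simp only at hai ⊢
  rw [← hai] at hs ⊢
  cases r with
  | pt j =>
    simp only [Reg.carr, Set.mem_singleton_iff] at hu hu'
    rw [hu']; rw [hu] at hs; exact hs
  | op j =>
    obtain ⟨h1, h2⟩ := hu
    obtain ⟨h1', h2'⟩ := hu'
    have hjn : j < n := hr
    have hcase : a i ≤ a j ∨ a (j+1) ≤ a i := by
      rcases le_or_gt i j with h | h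
      · exact Or.inl (amono hmono hin (by omega) h)
      · exact Or.inr (amono hmono (by omega) hin h)
    cases op with
    | lt =>
      simp only [Cmp.sat] at hs ⊢
      rcases hcase with h | h
      · exfalso; linarith
      · linarith
    | le =>
      simp only [Cmp.sat] at hs ⊢
      rcases hcase with h | h
      · exfalso; linarith
      · linarith
    | eq =>
      simp only [Cmp.sat] at hs
      exfalso
      rcases hcase with h | h <;> rw [hs] at h1 h2 <;> linarith
    | ge =>
      simp only [Cmp.sat] at hs ⊢
      rcases hcase with h | h
      · linarith
      · exfalso; linarith
    | gt =>
      simp only [Cmp.sat] at hs ⊢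
      rcases hcase with h | h
      · linarith
      · exfalso; linarith
  | top =>
    simp only [Reg.carr, Set.mem_Ioi] at hu hu'
    have hian : a i ≤ a n := amono hmono hin le_rfl hin
    cases op with
    | lt => simp only [Cmp.sat] at hs ⊢; exfalso; linarith
    | le => simp only [Cmp.sat] at hs ⊢; exfalso; linarith
    | eq =>
      simp only [Cmp.sat] at hs
      exfalso; rw [hs] at hu; linarith
    | ge => simp only [Cmp.sat] at hs ⊢; linarith
    | gt => simp only [Cmp.sat] at hs ⊢; linarith

end Regions

/-! ### niceness predicates and helpers -/

def Lmem (g : ℕ) (x : ℝ) : Prop := ∃ z : ℤ, x = (z : ℝ) / (g : ℝ)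

def Bmem {Q : Type} [Fintype Q] (A : PTA Q) (x : ℝ) : Prop :=
  x = 0 ∨ ∃ l : Q, x = (A.rate l : ℝ)

def NiceD {Q : Type} [Fintype Q] (A : PTA Q) (g : ℕ) (d : ID) : Prop :=
  Lmem g d.la ∧ Bmem A d.lb ∧ ∀ p ∈ d.hi, Lmem g p.1 ∧ Bmem A p.2

def ZeroSl (d : ID) : Prop := d.lb = 0 ∧ ∀ p ∈ d.hi, p.2 = 0

lemma Lmem_zero (g : ℕ) : Lmem g 0 := ⟨0, by simp⟩

lemma Bmem_zero {Q : Type} [Fintype Q] (A : PTA Q) : Bmem A 0 := Or.inl rfl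

lemma Bmem_rate {Q : Type} [Fintype Q] (A : PTA Q) (l : Q) : Bmem A ((A.rate l : ℝ)) :=
  Or.inr ⟨l, rfl⟩

lemma Bmem_int {Q : Type} [Fintype Q] {A : PTA Q} {x : ℝ} (h : Bmem A x) :
    ∃ m : ℤ, x = (m : ℝ) := by
  rcases h with h | ⟨l, h⟩
  · exact ⟨0, by simp [h]⟩
  · exact ⟨(A.rate l : ℤ), by rw [h]; push_cast; ring⟩

lemma Lmem_add_int_mul {g : ℕ} {x y : ℝ} (hx : Lmem g x) (m : ℤ) (hy : Lmem g y) :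
    Lmem g (x + (m : ℝ) * y) := by
  obtain ⟨z₁, rfl⟩ := hx
  obtain ⟨z₂, rfl⟩ := hy
  refine ⟨z₁ + m * z₂, ?_⟩
  push_cast
  ring

lemma Lmem_diff_mul {Q : Type} [Fintype Q] {A : PTA Q} {g : ℕ} {x y u : ℝ}
    (hx : Lmem g x) (hρ : Bmem A u) (hβ : Bmem A y) {c : ℝ} (hc : Lmem g c) :
    Lmem g (x + (u - y) * c) := by
  obtain ⟨m₁, rfl⟩ := Bmem_int hρ
  obtain ⟨m₂, rfl⟩ := Bmem_int hβ
  have : ((m₁ : ℝ) - m₂) = ((m₁ - m₂ : ℤ) : ℝ) := by push_cast; ring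
  rw [this]
  exact Lmem_add_int_mul hx _ hc

/-- path step with rewritten cost -/
lemma ppath_step' {Q : Type} [Fintype Q] {A : PTA Q} {s s' s'' : Q × ℝ} {c c' c'' : ℝ}
    (hm : PMove A s c s') (hp : PPath A s' c' s'') (h : c + c' = c'') :
    PPath A s c'' s'' := h ▸ PPath.step hm hp

/-! ### representation: cross into a point region -/

lemma repr_pt (ρ : ℝ) (d₂ : ID) (c₀ : ℝ) :
    ∃ d : ID, (∀ w : ℝ, evalI d w = Uker ρ w {c₀} d₂) ∧
      d.la = d₂.la + (ρ - d₂.lb) * c₀ ∧ d.lb = ρ ∧ d.bl = d₂.bl ∧ d.bh = d₂.bh ∧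
      ((d₂.hi = none ∧ d.hi = none) ∨
        ∃ p, d₂.hi = some p ∧ d.hi = some (p.1 + (ρ - p.2) * c₀, ρ)) := by
  refine ⟨⟨d₂.la + (ρ - d₂.lb) * c₀, ρ, d₂.bl,
    d₂.hi.map (fun p => (p.1 + (ρ - p.2) * c₀, ρ)), d₂.bh⟩, ?_, rfl, rfl, rfl, rfl, ?_⟩
  · intro w
    ext z
    simp only [Uker, Set.mem_singleton_iff, Set.mem_setOf_eq, evalI]
    constructor
    · rintro ⟨hlo, hhi⟩
      refine ⟨c₀, rfl, ?_, ?_⟩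
      · have : d₂.la - d₂.lb * c₀ = (d₂.la + (ρ - d₂.lb) * c₀ - ρ * w) - ρ * (c₀ - w) := by
          ring
        rw [this]
        cases hb : d₂.bl
        · have h' : d₂.la + (ρ - d₂.lb) * c₀ - ρ * w < z := by
            have := hlo; rw [hb] at this; exact this
          exact cmpB_of_lt (by linarith)
        · have h' : d₂.la + (ρ - d₂.lb) * c₀ - ρ * w ≤ z := by
            have := hlo; rw [hb] at this; exact this
          show _ ≤ _
          linarith
      · intro p hp
        have hd2 : d₂.hi = some p := Option.mem_def.mp hp
        have := hhi (p.1 + (ρ - p.2) * c₀, ρ) (by rw [hd2]; simp)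
        simp only at this
        have heq : p.1 - p.2 * c₀ = (p.1 + (ρ - p.2) * c₀ - ρ * w) - ρ * (c₀ - w) := by ring
        rw [heq]
        cases hb : d₂.bh
        · have h' : z < p.1 + (ρ - p.2) * c₀ - ρ * w := by
            have h2 := this; rw [hb] at h2; exact h2
          exact cmpB_of_lt (by linarith)
        · have h' : z ≤ p.1 + (ρ - p.2) * c₀ - ρ * w := by
            have h2 := this; rw [hb] at h2; exact h2
          show _ ≤ _
          linarith
    · rintro ⟨t, rfl, hlo, hhi⟩
      constructor
      · have heq : d₂.la + (ρ - d₂.lb) * t - ρ * w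
            = (d₂.la - d₂.lb * t) + ρ * (t - w) := by ring
        rw [heq]
        cases hb : d₂.bl
        · have h' : d₂.la - d₂.lb * t < z - ρ * (t - w) := by
            have := hlo; rw [hb] at this; exact this
          exact cmpB_of_lt (by linarith)
        · have h' : d₂.la - d₂.lb * t ≤ z - ρ * (t - w) := by
            have := hlo; rw [hb] at this; exact this
          show _ ≤ _
          linarith
      · intro p hp
        cases hd : d₂.hi with
        | none => rw [hd] at hp; simp at hp
        | some p₀ =>
          rw [hd] at hp
          have hpe : p = (p₀.1 + (ρ - p₀.2) * t, ρ) := by simpa using hp.symm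
          subst hpe
          have h₀ := hhi p₀ (by simp [hd])
          simp only
          have heq : p₀.1 + (ρ - p₀.2) * t - ρ * w = (p₀.1 - p₀.2 * t) + ρ * (t - w) := by
            ring
          rw [heq]
          cases hb : d₂.bh
          · have h' : z - ρ * (t - w) < p₀.1 - p₀.2 * t := by
              have := h₀; rw [hb] at this; exact this
            exact cmpB_of_lt (by linarith)
          · have h' : z - ρ * (t - w) ≤ p₀.1 - p₀.2 * t := by
              have := h₀; rw [hb] at this; exact this
            show _ ≤ _
            linarith
  · cases hd : d₂.hi with
    | none => exact Or.inl ⟨rfl, by simp⟩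
    | some p => exact Or.inr ⟨p, rfl, by simp⟩

/-! ### representation: delay within the same open (bounded) region -/

lemma Ico_OC (w U' : ℝ) : ∀ t₁ ∈ Set.Ico w U', ∀ t₂ ∈ Set.Ico w U', ∀ t, t₁ ≤ t → t ≤ t₂ → t ∈ Set.Ico w U' :=
  fun t₁ h₁ t₂ h₂ t ht1 ht2 => ⟨le_trans h₁.1 ht1, lt_of_le_of_lt ht2 h₂.2⟩

lemma repr_sameop (ρ : ℝ) (d₂ : ID) (L U' : ℝ)
    (hsl : ∀ t ∈ Set.Ioo L U', (evalI d₂ t).Nonempty) :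
    ∃ d : ID,
      (∀ w ∈ Set.Ioo L U', evalI d w = Uker ρ w (Set.Ico w U') d₂) ∧
      ((d.la = d₂.la ∧ d.lb = d₂.lb) ∨ (d.la = d₂.la + (ρ - d₂.lb) * U' ∧ d.lb = ρ)) ∧
      ((d₂.hi = none ∧ d.hi = none) ∨
        ∃ p, d₂.hi = some p ∧ (d.hi = some p ∨ d.hi = some (p.1 + (ρ - p.2) * U', ρ))) := by
  have hslW : ∀ w ∈ Set.Ioo L U', ∀ t ∈ Set.Ico w U', (evalI d₂ t).Nonempty :=
    fun w hw t ht => hsl t ⟨lt_of_lt_of_le hw.1 ht.1, ht.2⟩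
  have hlow : ∃ la lb bl,
      (∀ w ∈ Set.Ioo L U', LM (Uker ρ w (Set.Ico w U') d₂) (la - lb * w) bl) ∧
      ((la = d₂.la ∧ lb = d₂.lb) ∨ (la = d₂.la + (ρ - d₂.lb) * U' ∧ lb = ρ)) := by
    rcases le_or_gt d₂.lb ρ with hc | hc
    · refine ⟨d₂.la, d₂.lb, d₂.bl, ?_, Or.inl ⟨rfl, rfl⟩⟩
      intro w hw
      apply LM_Uker (hslW w hw)
      · intro t ht
        nlinarith [ht.1, sub_nonneg.mpr hc]
      · cases hbl : d₂.bl with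
        | true =>
          simp only [if_true]
          exact ⟨trivial, w, ⟨le_rfl, hw.2⟩, by ring⟩
        | false =>
          simp only [Bool.false_eq_true, if_false]
          constructor
          · intro ε hε
            exact ⟨w, ⟨le_rfl, hw.2⟩, by nlinarith⟩
          · intro h; exact h.elim
    · refine ⟨d₂.la + (ρ - d₂.lb) * U', ρ, false, ?_, Or.inr ⟨rfl, rfl⟩⟩
      intro w hw
      apply LM_Uker (hslW w hw)
      · intro t ht
        nlinarith [ht.2]
      · simp only [Bool.false_eq_true, if_false]
        constructor
        · intro ε hε
          obtain ⟨t, ht, h1, h2⟩ :=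
            affApprox (approaches_Ico_right hw.2) (ρ - d₂.lb) (d₂.la - ρ * w) ε hε
          exact ⟨t, ht, by nlinarith⟩
        · intro _ t ht
          nlinarith [ht.2]
  have hupp : ∃ (hiopt : Option (ℝ × ℝ)) (bh : Bool),
      (∀ w ∈ Set.Ioo L U', UM (Uker ρ w (Set.Ico w U') d₂) hiopt bh w) ∧
      ((d₂.hi = none ∧ hiopt = none) ∨
        ∃ p, d₂.hi = some p ∧ (hiopt = some p ∨ hiopt = some (p.1 + (ρ - p.2) * U', ρ))) := by
    cases hhi : d₂.hi with
    | none =>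
      refine ⟨none, true, ?_, Or.inl ⟨rfl, rfl⟩⟩
      intro w hw
      exact UMnone_noub hhi ⟨w, le_rfl, hw.2⟩
    | some p =>
      rcases le_or_gt ρ p.2 with hc | hc
      · refine ⟨some p, d₂.bh, ?_, Or.inr ⟨p, rfl, Or.inl rfl⟩⟩
        intro w hw
        show UMub _ _ _
        apply UMub_Uker hhi (hslW w hw)
        · intro t ht
          nlinarith [ht.1, sub_nonneg.mpr hc]
        · cases hbh : d₂.bh with
          | true =>
            simp only [if_true]
            exact ⟨trivial, w, ⟨le_rfl, hw.2⟩, by ring⟩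
          | false =>
            simp only [Bool.false_eq_true, if_false]
            constructor
            · intro ε hε
              exact ⟨w, ⟨le_rfl, hw.2⟩, by nlinarith⟩
            · intro h; exact h.elim
      · refine ⟨some (p.1 + (ρ - p.2) * U', ρ), false, ?_, Or.inr ⟨p, rfl, Or.inr rfl⟩⟩
        intro w hw
        show UMub _ _ _
        apply UMub_Uker hhi (hslW w hw)
        · intro t ht
          show (ρ - p.2) * t + (p.1 - ρ * w) ≤ p.1 + (ρ - p.2) * U' - ρ * w
          nlinarith [ht.2]
        · simp only [Bool.false_eq_true, if_false]
          constructor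
          · intro ε hε
            obtain ⟨t, ht, h1, h2⟩ :=
              affApprox (approaches_Ico_right hw.2) (ρ - p.2) (p.1 - ρ * w) ε hε
            refine ⟨t, ht, ?_⟩
            show p.1 + (ρ - p.2) * U' - ρ * w - ε < (ρ - p.2) * t + (p.1 - ρ * w)
            nlinarith
          · intro _ t ht
            show (ρ - p.2) * t + (p.1 - ρ * w) < p.1 + (ρ - p.2) * U' - ρ * w
            nlinarith [ht.2]
  obtain ⟨la, lb, bl, hLM, hLc⟩ := hlow
  obtain ⟨hiopt, bh, hUM, hUc⟩ := hupp
  refine ⟨⟨la, lb, bl, hiopt, bh⟩, ?_, hLc, hUc⟩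
  intro w hw
  exact (sandwich (Uker_OC ρ w (Ico_OC w U') d₂) ⟨la, lb, bl, hiopt, bh⟩ w
    (hLM w hw) (hUM w hw)).symm

lemma Ici_OC (w : ℝ) : ∀ t₁ ∈ Set.Ici w, ∀ t₂ ∈ Set.Ici w, ∀ t, t₁ ≤ t → t ≤ t₂ → t ∈ Set.Ici w :=
  fun t₁ h₁ _ _ t ht1 _ => le_trans h₁ ht1

lemma Ioo_OC (L U : ℝ) : ∀ t₁ ∈ Set.Ioo L U, ∀ t₂ ∈ Set.Ioo L U, ∀ t, t₁ ≤ t → t ≤ t₂ → t ∈ Set.Ioo L U :=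
  fun t₁ h₁ t₂ h₂ t ht1 ht2 => ⟨lt_of_lt_of_le h₁.1 ht1, lt_of_le_of_lt ht2 h₂.2⟩

lemma Ioi_OC (L : ℝ) : ∀ t₁ ∈ Set.Ioi L, ∀ t₂ ∈ Set.Ioi L, ∀ t, t₁ ≤ t → t ≤ t₂ → t ∈ Set.Ioi L :=
  fun t₁ h₁ _ _ t ht1 _ => lt_of_lt_of_le h₁ ht1

/-! ### representation: delay within the top region -/

lemma repr_sametop (ρ : ℝ) (hρ : 0 ≤ ρ) (d₂ : ID) (L : ℝ) (hz₂ : ZeroSl d₂)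
    (hsl : ∀ t ∈ Set.Ioi L, (evalI d₂ t).Nonempty) :
    ∃ d : ID, (∀ w ∈ Set.Ioi L, evalI d w = Uker ρ w (Set.Ici w) d₂) ∧
      d.la = d₂.la ∧ d.lb = 0 ∧
      ((d₂.hi = none ∧ d.hi = none) ∨
        ∃ p, d₂.hi = some p ∧ (d.hi = none ∨ d.hi = some (p.1, 0))) := by
  have hlb := hz₂.1
  have hslW : ∀ w ∈ Set.Ioi L, ∀ t ∈ Set.Ici w, (evalI d₂ t).Nonempty :=
    fun w hw t ht => hsl t (show L < t from lt_of_lt_of_le (show L < w from hw) (show w ≤ t from ht))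
  have hlow : ∀ w ∈ Set.Ioi L, LM (Uker ρ w (Set.Ici w) d₂) (d₂.la - 0 * w) d₂.bl := by
    intro w hw
    apply LM_Uker (hslW w hw)
    · intro t ht
      rw [hlb]
      have ht' : w ≤ t := ht
      nlinarith
    · cases hbl : d₂.bl with
      | true =>
        simp only [if_true]
        exact ⟨trivial, w, Set.self_mem_Ici, by rw [hlb]; ring⟩
      | false =>
        simp only [Bool.false_eq_true, if_false]
        refine ⟨fun ε hε => ⟨w, Set.self_mem_Ici, by rw [hlb]; nlinarith⟩, fun h => h.elim⟩
  have hupp : ∃ (hiopt : Option (ℝ × ℝ)) (bh : Bool),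
      (∀ w ∈ Set.Ioi L, UM (Uker ρ w (Set.Ici w) d₂) hiopt bh w) ∧
      ((d₂.hi = none ∧ hiopt = none) ∨
        ∃ p, d₂.hi = some p ∧ (hiopt = none ∨ hiopt = some (p.1, 0))) := by
    cases hhi : d₂.hi with
    | none =>
      exact ⟨none, true, fun w hw => UMnone_noub hhi ⟨w, Set.self_mem_Ici⟩, Or.inl ⟨rfl, rfl⟩⟩
    | some p =>
      have hp2 : p.2 = 0 := hz₂.2 p (by simp [hhi])
      rcases eq_or_lt_of_le hρ with hρ0 | hρpos
      · refine ⟨some (p.1, 0), d₂.bh, ?_, Or.inr ⟨p, rfl, Or.inr rfl⟩⟩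
        intro w hw
        show UMub _ _ _
        apply UMub_Uker hhi (hslW w hw)
        · intro t ht
          show (ρ - p.2) * t + (p.1 - ρ * w) ≤ p.1 - 0 * w
          rw [hp2, ← hρ0]
          nlinarith
        · cases hbh : d₂.bh with
          | true =>
            simp only [if_true]
            exact ⟨trivial, w, Set.self_mem_Ici, by rw [hp2, ← hρ0]; ring⟩
          | false =>
            simp only [Bool.false_eq_true, if_false]
            refine ⟨fun ε hε => ⟨w, Set.self_mem_Ici, ?_⟩, fun h => h.elim⟩
            show p.1 - 0 * w - ε < (ρ - p.2) * w + (p.1 - ρ * w)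
            rw [hp2, ← hρ0]
            nlinarith
      · refine ⟨none, true, ?_, Or.inr ⟨p, rfl, Or.inl rfl⟩⟩
        intro w hw
        apply UMnone_ub hhi (hslW w hw)
        have hc : 0 < ρ - p.2 := by rw [hp2]; linarith
        exact affTop (fun t htw => htw) hc (p.1 - ρ * w)
  obtain ⟨hiopt, bh, hUM, hUc⟩ := hupp
  refine ⟨⟨d₂.la, 0, d₂.bl, hiopt, bh⟩, ?_, rfl, rfl, hUc⟩
  intro w hw
  exact (sandwich (Uker_OC ρ w (Ici_OC w) d₂) ⟨d₂.la, 0, d₂.bl, hiopt, bh⟩ w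
    (hlow w hw) (hUM w hw)).symm

/-! ### representation: delay crossing into a higher open region -/

lemma repr_crossop (ρ : ℝ) (d₂ : ID) (L₂ U₂ : ℝ) (hLU : L₂ < U₂)
    (hsl : ∀ t ∈ Set.Ioo L₂ U₂, (evalI d₂ t).Nonempty) :
    ∃ d : ID, (∀ w : ℝ, evalI d w = Uker ρ w (Set.Ioo L₂ U₂) d₂) ∧
      d.lb = ρ ∧
      (d.la = d₂.la ∨ d.la = d₂.la + (ρ - d₂.lb) * L₂ ∨ d.la = d₂.la + (ρ - d₂.lb) * U₂) ∧
      ((d₂.hi = none ∧ d.hi = none) ∨ ∃ p, d₂.hi = some p ∧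
        (d.hi = some (p.1, ρ) ∨ d.hi = some (p.1 + (ρ - p.2) * L₂, ρ) ∨
          d.hi = some (p.1 + (ρ - p.2) * U₂, ρ))) := by
  have hmid : (L₂ + U₂) / 2 ∈ Set.Ioo L₂ U₂ := ⟨by linarith, by linarith⟩
  have hlow : ∃ la bl,
      (∀ w : ℝ, LM (Uker ρ w (Set.Ioo L₂ U₂) d₂) (la - ρ * w) bl) ∧
      (la = d₂.la ∨ la = d₂.la + (ρ - d₂.lb) * L₂ ∨ la = d₂.la + (ρ - d₂.lb) * U₂) := by
    rcases lt_trichotomy d₂.lb ρ with hc | hc | hc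
    · -- cL > 0 : infimum towards L₂, open
      refine ⟨d₂.la + (ρ - d₂.lb) * L₂, false, ?_, Or.inr (Or.inl rfl)⟩
      intro w
      apply LM_Uker hsl
      · intro t ht
        nlinarith [ht.1]
      · simp only [Bool.false_eq_true, if_false]
        constructor
        · intro ε hε
          obtain ⟨t, ht, h1, h2⟩ :=
            affApprox (approaches_Ioo_left hLU) (ρ - d₂.lb) (d₂.la - ρ * w) ε hε
          exact ⟨t, ht, by nlinarith⟩
        · intro _ t ht
          nlinarith [ht.1]
    · -- cL = 0
      refine ⟨d₂.la, d₂.bl, ?_, Or.inl rfl⟩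
      intro w
      apply LM_Uker hsl
      · intro t ht
        rw [hc]
        nlinarith
      · cases hbl : d₂.bl with
        | true =>
          simp only [if_true]
          exact ⟨trivial, (L₂ + U₂) / 2, hmid, by rw [hc]; ring⟩
        | false =>
          simp only [Bool.false_eq_true, if_false]
          refine ⟨fun ε hε => ⟨(L₂ + U₂) / 2, hmid, by rw [hc]; nlinarith⟩, fun h => h.elim⟩
    · -- cL < 0 : infimum towards U₂, open
      refine ⟨d₂.la + (ρ - d₂.lb) * U₂, false, ?_, Or.inr (Or.inr rfl)⟩
      intro w
      apply LM_Uker hsl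
      · intro t ht
        nlinarith [ht.2]
      · simp only [Bool.false_eq_true, if_false]
        constructor
        · intro ε hε
          obtain ⟨t, ht, h1, h2⟩ :=
            affApprox (approaches_Ioo_right hLU) (ρ - d₂.lb) (d₂.la - ρ * w) ε hε
          exact ⟨t, ht, by nlinarith⟩
        · intro _ t ht
          nlinarith [ht.2]
  have hupp : ∃ (hiopt : Option (ℝ × ℝ)) (bh : Bool),
      (∀ w : ℝ, UM (Uker ρ w (Set.Ioo L₂ U₂) d₂) hiopt bh w) ∧
      ((d₂.hi = none ∧ hiopt = none) ∨ ∃ p, d₂.hi = some p ∧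
        (hiopt = some (p.1, ρ) ∨ hiopt = some (p.1 + (ρ - p.2) * L₂, ρ) ∨
          hiopt = some (p.1 + (ρ - p.2) * U₂, ρ))) := by
    cases hhi : d₂.hi with
    | none =>
      exact ⟨none, true, fun w => UMnone_noub hhi ⟨(L₂ + U₂) / 2, hmid⟩, Or.inl ⟨rfl, rfl⟩⟩
    | some p =>
      rcases lt_trichotomy p.2 ρ with hc | hc | hc
      · -- cH > 0 : supremum towards U₂, open
        refine ⟨some (p.1 + (ρ - p.2) * U₂, ρ), false, ?_, Or.inr ⟨p, rfl, Or.inr (Or.inr rfl)⟩⟩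
        intro w
        show UMub _ _ _
        apply UMub_Uker hhi hsl
        · intro t ht
          show (ρ - p.2) * t + (p.1 - ρ * w) ≤ p.1 + (ρ - p.2) * U₂ - ρ * w
          nlinarith [ht.2]
        · simp only [Bool.false_eq_true, if_false]
          constructor
          · intro ε hε
            obtain ⟨t, ht, h1, h2⟩ :=
              affApprox (approaches_Ioo_right hLU) (ρ - p.2) (p.1 - ρ * w) ε hε
            refine ⟨t, ht, ?_⟩
            show p.1 + (ρ - p.2) * U₂ - ρ * w - ε < (ρ - p.2) * t + (p.1 - ρ * w)
            nlinarith
          · intro _ t ht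
            show (ρ - p.2) * t + (p.1 - ρ * w) < p.1 + (ρ - p.2) * U₂ - ρ * w
            nlinarith [ht.2]
      · -- cH = 0
        refine ⟨some (p.1, ρ), d₂.bh, ?_, Or.inr ⟨p, rfl, Or.inl rfl⟩⟩
        intro w
        show UMub _ _ _
        apply UMub_Uker hhi hsl
        · intro t ht
          show (ρ - p.2) * t + (p.1 - ρ * w) ≤ p.1 - ρ * w
          rw [hc]
          nlinarith
        · cases hbh : d₂.bh with
          | true =>
            simp only [if_true]
            exact ⟨trivial, (L₂ + U₂) / 2, hmid, by rw [hc]; ring⟩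
          | false =>
            simp only [Bool.false_eq_true, if_false]
            refine ⟨fun ε hε => ⟨(L₂ + U₂) / 2, hmid, ?_⟩, fun h => h.elim⟩
            show p.1 - ρ * w - ε < (ρ - p.2) * ((L₂ + U₂) / 2) + (p.1 - ρ * w)
            rw [hc]
            nlinarith
      · -- cH < 0 : supremum towards L₂, open
        refine ⟨some (p.1 + (ρ - p.2) * L₂, ρ), false, ?_, Or.inr ⟨p, rfl, Or.inr (Or.inl rfl)⟩⟩
        intro w
        show UMub _ _ _
        apply UMub_Uker hhi hsl
        · intro t ht
          show (ρ - p.2) * t + (p.1 - ρ * w) ≤ p.1 + (ρ - p.2) * L₂ - ρ * w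
          nlinarith [ht.1]
        · simp only [Bool.false_eq_true, if_false]
          constructor
          · intro ε hε
            obtain ⟨t, ht, h1, h2⟩ :=
              affApprox (approaches_Ioo_left hLU) (ρ - p.2) (p.1 - ρ * w) ε hε
            refine ⟨t, ht, ?_⟩
            show p.1 + (ρ - p.2) * L₂ - ρ * w - ε < (ρ - p.2) * t + (p.1 - ρ * w)
            nlinarith
          · intro _ t ht
            show (ρ - p.2) * t + (p.1 - ρ * w) < p.1 + (ρ - p.2) * L₂ - ρ * w
            nlinarith [ht.1]
  obtain ⟨la, bl, hLM, hLc⟩ := hlow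
  obtain ⟨hiopt, bh, hUM, hUc⟩ := hupp
  refine ⟨⟨la, ρ, bl, hiopt, bh⟩, ?_, rfl, hLc, hUc⟩
  intro w
  exact (sandwich (Uker_OC ρ w (Ioo_OC L₂ U₂) d₂) ⟨la, ρ, bl, hiopt, bh⟩ w
    (hLM w) (hUM w)).symm

/-! ### representation: delay crossing into the top region -/

lemma repr_crosstop (ρ : ℝ) (hρ : 0 ≤ ρ) (d₂ : ID) (L₂ : ℝ) (hz₂ : ZeroSl d₂)
    (hsl : ∀ t ∈ Set.Ioi L₂, (evalI d₂ t).Nonempty) :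
    ∃ d : ID, (∀ w : ℝ, evalI d w = Uker ρ w (Set.Ioi L₂) d₂) ∧
      d.la = d₂.la + ρ * L₂ ∧ d.lb = ρ ∧
      ((d₂.hi = none ∧ d.hi = none) ∨
        ∃ p, d₂.hi = some p ∧ (d.hi = none ∨ d.hi = some (p.1, ρ))) := by
  have hlb := hz₂.1
  have hL1 : L₂ + 1 ∈ Set.Ioi L₂ := by simp
  have hlow : ∃ bl, ∀ w : ℝ,
      LM (Uker ρ w (Set.Ioi L₂) d₂) ((d₂.la + ρ * L₂) - ρ * w) bl := by
    rcases eq_or_lt_of_le hρ with hρ0 | hρpos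
    · refine ⟨d₂.bl, fun w => ?_⟩
      apply LM_Uker hsl
      · intro t ht
        rw [hlb, ← hρ0]
        nlinarith
      · cases hbl : d₂.bl with
        | true =>
          simp only [if_true]
          exact ⟨trivial, L₂ + 1, hL1, by rw [hlb, ← hρ0]; ring⟩
        | false =>
          simp only [Bool.false_eq_true, if_false]
          refine ⟨fun ε hε => ⟨L₂ + 1, hL1, by rw [hlb, ← hρ0]; nlinarith⟩, fun h => h.elim⟩
    · refine ⟨false, fun w => ?_⟩
      apply LM_Uker hsl
      · intro t ht
        have ht' : L₂ < t := ht
        rw [hlb]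
        nlinarith
      · simp only [Bool.false_eq_true, if_false]
        constructor
        · intro ε hε
          obtain ⟨t, ht, h1, h2⟩ :=
            affApprox approaches_Ioi_left (ρ - d₂.lb) (d₂.la - ρ * w) ε hε
          refine ⟨t, ht, ?_⟩
          rw [hlb] at h1 ⊢
          nlinarith
        · intro _ t ht
          have ht' : L₂ < t := ht
          rw [hlb]
          nlinarith
  have hupp : ∃ (hiopt : Option (ℝ × ℝ)) (bh : Bool),
      (∀ w : ℝ, UM (Uker ρ w (Set.Ioi L₂) d₂) hiopt bh w) ∧
      ((d₂.hi = none ∧ hiopt = none) ∨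
        ∃ p, d₂.hi = some p ∧ (hiopt = none ∨ hiopt = some (p.1, ρ))) := by
    cases hhi : d₂.hi with
    | none =>
      exact ⟨none, true, fun w => UMnone_noub hhi ⟨L₂ + 1, hL1⟩, Or.inl ⟨rfl, rfl⟩⟩
    | some p =>
      have hp2 : p.2 = 0 := hz₂.2 p (by simp [hhi])
      rcases eq_or_lt_of_le hρ with hρ0 | hρpos
      · refine ⟨some (p.1, ρ), d₂.bh, ?_, Or.inr ⟨p, rfl, Or.inr rfl⟩⟩
        intro w
        show UMub _ _ _
        apply UMub_Uker hhi hsl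
        · intro t ht
          show (ρ - p.2) * t + (p.1 - ρ * w) ≤ p.1 - ρ * w
          rw [hp2, ← hρ0]
          nlinarith
        · cases hbh : d₂.bh with
          | true =>
            simp only [if_true]
            exact ⟨trivial, L₂ + 1, hL1, by rw [hp2, ← hρ0]; ring⟩
          | false =>
            simp only [Bool.false_eq_true, if_false]
            refine ⟨fun ε hε => ⟨L₂ + 1, hL1, ?_⟩, fun h => h.elim⟩
            show p.1 - ρ * w - ε < (ρ - p.2) * (L₂ + 1) + (p.1 - ρ * w)
            rw [hp2, ← hρ0]
            nlinarith
      · refine ⟨none, true, ?_, Or.inr ⟨p, rfl, Or.inl rfl⟩⟩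
        intro w
        apply UMnone_ub hhi hsl
        have hc : 0 < ρ - p.2 := by rw [hp2]; linarith
        intro M
        obtain ⟨t, ht, h⟩ := affTop (fun t htw => show t ∈ Set.Ioi L₂ from lt_of_lt_of_le (by linarith : L₂ < L₂ + 1) htw) hc (p.1 - ρ * w) M
        exact ⟨t, ht, h⟩
  obtain ⟨bl, hLM⟩ := hlow
  obtain ⟨hiopt, bh, hUM, hUc⟩ := hupp
  refine ⟨⟨d₂.la + ρ * L₂, ρ, bl, hiopt, bh⟩, ?_, rfl, rfl, hUc⟩
  intro w
  exact (sandwich (Uker_OC ρ w (Ioi_OC L₂) d₂) ⟨d₂.la + ρ * L₂, ρ, bl, hiopt, bh⟩ w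
    (hLM w) (hUM w)).symm

lemma reg_idx_le {n : ℕ} {r : Reg} (hr : r.good n) : r.idx n ≤ 2 * n + 1 := by
  cases r with
  | pt j => have : j ≤ n := hr; simp [Reg.idx]; omega
  | op j => have : j < n := hr; simp [Reg.idx]; omega
  | top => simp [Reg.idx]

lemma Lmem_congr {g : ℕ} {x y : ℝ} (h : x = y) (hx : Lmem g x) : Lmem g y := h ▸ hx

lemma evalI_zero_iff (w y : ℝ) :
    y ∈ evalI ⟨0, 0, true, some (0, 0), true⟩ w ↔ y = 0 := by
  constructor
  · rintro ⟨hlo, hhi⟩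
    have h1 : (0:ℝ) - 0 * w ≤ y := hlo
    have h2 : y ≤ (0:ℝ) - 0 * w := by
      have := hhi (0, 0) (by simp)
      exact this
    have : (0:ℝ) - 0 * w = 0 := by ring
    rw [this] at h1 h2
    linarith
  · rintro rfl
    refine ⟨?_, ?_⟩
    · show (0:ℝ) - 0 * w ≤ 0
      ring_nf
      exact le_refl 0
    · intro p hp
      have hpe : p = (0, 0) := by simpa using (Option.mem_def.mp hp).symm
      subst hpe
      show (0:ℝ) ≤ 0 - 0 * w
      ring_nf
      exact le_refl 0

/-- **Core lemma**: every path ending in the target region admits a uniformly sound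
interval representation with lattice endpoints and rate slopes. -/
theorem core {Q : Type} [Fintype Q] (A : PTA Q) (hdisc : ∀ e ∈ A.E, e.dcost = 0)
    {n : ℕ} {a : ℕ → ℝ} (h0 : a 0 = 0)
    (hmono : ∀ i j : ℕ, i ≤ n → j ≤ n → i < j → a i < a j)
    (hconsts : ∀ c ∈ PTA.consts A, ∃ i ≤ n, a i = (c : ℝ))
    (g : ℕ) (hmult : ∀ i ≤ n, ∃ k : ℕ, a i = (k : ℝ) / (g : ℝ))
    (q' : Q) (rg' : Reg) (hok' : rg'.good n)
    {s1 : Q × ℝ} {c : ℝ} {s2 : Q × ℝ} (hpath : PPath A s1 c s2) :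
    s2.1 = q' → s2.2 ∈ rg'.carr a n →
    ∀ rg : Reg, rg.good n → s1.2 ∈ rg.carr a n →
    ∃ d : ID, NiceD A g d ∧ (rg = Reg.top → ZeroSl d) ∧
      (∀ w ∈ rg.carr a n, (evalI d w).Nonempty) ∧
      c ∈ evalI d s1.2 ∧
      (∀ w ∈ rg.carr a n, ∀ y ∈ evalI d w,
        ∃ β ∈ rg'.carr a n, PPath A (s1.1, w) y (q', β)) := by
  have hcsg : ∀ e ∈ A.E, ∀ p ∈ e.guard, ∃ i ≤ n, a i = (p.2 : ℝ) :=
    fun e he p hp => hconsts p.2 (Or.inl ⟨e, he, p, hp, rfl⟩)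
  have hcsi : ∀ l : Q, ∀ p ∈ A.Inv l, ∃ i ≤ n, a i = (p.2 : ℝ) :=
    fun l p hp => hconsts p.2 (Or.inr ⟨l, p, hp, rfl⟩)
  have hLa : ∀ i, i ≤ n → Lmem g (a i) := by
    intro i hi
    obtain ⟨k, hk⟩ := hmult i hi
    exact ⟨(k : ℤ), by rw [hk]; norm_num⟩
  induction hpath with
  | refl s =>
    intro htgt hmem rg hok hmemr
    have hrg : rg = rg' := reg_eq_of_mem hmono hok hok' hmemr hmem
    subst hrg
    refine ⟨⟨0, 0, true, some (0, 0), true⟩, ?_, ?_, ?_, ?_, ?_⟩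
    · refine ⟨Lmem_zero g, Bmem_zero A, ?_⟩
      intro p hp
      have hpe : p = (0, 0) := by simpa using (Option.mem_def.mp hp).symm
      subst hpe
      exact ⟨Lmem_zero g, Bmem_zero A⟩
    · intro _
      refine ⟨rfl, ?_⟩
      intro p hp
      have hpe : p = (0, 0) := by simpa using (Option.mem_def.mp hp).symm
      subst hpe
      rfl
    · intro w hw
      exact ⟨0, (evalI_zero_iff w 0).mpr rfl⟩
    · exact (evalI_zero_iff s.2 0).mpr rfl
    · intro w hw y hy
      have hy0 : y = 0 := (evalI_zero_iff w y).mp hy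
      subst hy0
      refine ⟨w, hw, ?_⟩
      rw [← htgt]
      exact PPath.refl (s.1, w)
  | step hm hp ih =>
    rename_i s s' s'' cm ct
    intro htgt hmem rg hok hmemr
    rcases hm with hdel | hdsc
    · -- delay move
      obtain ⟨t, ht0, hs', hcost, hinv⟩ := hdel
      subst hs'
      have hρ : (0:ℝ) ≤ (A.rate s.1 : ℝ) := Nat.cast_nonneg _
      have hv0 : 0 ≤ s.2 := reg_mem_nonneg hmono h0 hok hmemr
      obtain ⟨rg₂, hok₂, hmem₂⟩ := reg_cover h0 (by linarith : (0:ℝ) ≤ s.2 + t)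
      obtain ⟨d₂, hN₂, hZ₂, hne₂, hcin₂, hreal₂⟩ := ih htgt hmem rg₂ hok₂ hmem₂
      have hle : rg.idx n ≤ rg₂.idx n := by
        by_contra hcon
        push_neg at hcon
        have := regLT hmono hok₂ hok hcon (s.2 + t) hmem₂ s.2 hmemr
        linarith
      have hinvseg : ∀ w ∈ rg.carr a n, ∀ w₂ ∈ rg₂.carr a n, w ≤ w₂ →
          ∀ u, w ≤ u → u ≤ w₂ → PGuard.sat (A.Inv s.1) u := by
        intro w hw w₂ hw₂ hww u h1 h2
        have hu0 : 0 ≤ u := le_trans (reg_mem_nonneg hmono h0 hok hw) h1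
        obtain ⟨ru, hoku, hmu⟩ := reg_cover h0 hu0
        rcases lt_trichotomy (ru.idx n) (rg.idx n) with hlt1 | heq1 | hgt1
        · exact absurd (regLT hmono hoku hok hlt1 u hmu w hw) (by linarith)
        · have hru : ru = rg := reg_idx_inj hoku hok heq1
          subst hru
          have hsatv : PGuard.sat (A.Inv s.1) s.2 := by
            have := hinv 0 le_rfl ht0
            simpa using this
          exact guard_region_invariant hmono (hcsi s.1) hoku hmemr hmu hsatv
        · rcases lt_trichotomy (ru.idx n) (rg₂.idx n) with hlt2 | heq2 | hgt2
          · have hvu : s.2 < u := regLT hmono hok hoku hgt1 s.2 hmemr u hmu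
            have huv : u < s.2 + t := regLT hmono hoku hok₂ hlt2 u hmu (s.2 + t) hmem₂
            have := hinv (u - s.2) (by linarith) (by linarith)
            have heq : s.2 + (u - s.2) = u := by ring
            rwa [heq] at this
          · have hru : ru = rg₂ := reg_idx_inj hoku hok₂ heq2
            subst hru
            have hsatv : PGuard.sat (A.Inv s.1) (s.2 + t) := hinv t ht0 le_rfl
            exact guard_region_invariant hmono (hcsi s.1) hoku hmem₂ hmu hsatv
          · exact absurd (regLT hmono hok₂ hoku hgt2 w₂ hw₂ u hmu) (by linarith)
      have hmkpath : ∀ w ∈ rg.carr a n, ∀ w₂ ∈ rg₂.carr a n, w ≤ w₂ →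
          ∀ y : ℝ, y - (A.rate s.1 : ℝ) * (w₂ - w) ∈ evalI d₂ w₂ →
          ∃ β ∈ rg'.carr a n, PPath A (s.1, w) y (q', β) := by
        intro w hw w₂ hw₂ hww y hy
        obtain ⟨β, hβ, hpath₂⟩ := hreal₂ w₂ hw₂ _ hy
        have hdm : DelayMove A (s.1, w) ((w₂ - w) * (A.rate s.1 : ℝ)) (s.1, w₂) := by
          refine ⟨w₂ - w, by linarith, ?_, rfl, ?_⟩
          · show (s.1, w₂) = ((s.1, w).1, (s.1, w).2 + (w₂ - w))
            rw [Prod.mk.injEq]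
            exact ⟨rfl, by ring⟩
          · intro t' h1 h2
            exact hinvseg w hw w₂ hw₂ hww ((s.1, w).2 + t') (by simp; linarith)
              (by simp at h2 ⊢; linarith)
        exact ⟨β, hβ, ppath_step' (Or.inl hdm) hpath₂ (by ring)⟩
      rcases eq_or_lt_of_le hle with heq | hlt
      · -- same region
        have hrg2 : rg = rg₂ := reg_idx_inj hok hok₂ heq
        subst hrg2
        cases rg with
        | pt j =>
          have hveq : s.2 = a j := hmemr
          have hteq : s.2 + t = a j := hmem₂
          have ht00 : t = 0 := by linarith
          refine ⟨d₂, hN₂, fun h => Reg.noConfusion h, hne₂, ?_, ?_⟩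
          · have hcc : cm + ct = ct := by rw [hcost, ht00]; ring
            rw [hcc]
            have hse : s.2 + t = s.2 := by rw [ht00]; ring
            rw [← hse]
            exact hcin₂
          · intro w hw y hy
            exact hreal₂ w hw y hy
        | op j =>
          have hjn : j < n := hok
          obtain ⟨d, hrepr, hLc, hUc⟩ :=
            repr_sameop (A.rate s.1 : ℝ) d₂ (a j) (a (j + 1)) hne₂
          refine ⟨d, ?_, fun h => Reg.noConfusion h, ?_, ?_, ?_⟩
          · -- Nice
            refine ⟨?_, ?_, ?_⟩
            · rcases hLc with ⟨h1, _⟩ | ⟨h1, _⟩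
              · rw [h1]; exact hN₂.1
              · rw [h1]
                exact Lmem_diff_mul hN₂.1 (Bmem_rate A s.1) hN₂.2.1 (hLa (j+1) (by omega))
            · rcases hLc with ⟨_, h2⟩ | ⟨_, h2⟩
              · rw [h2]; exact hN₂.2.1
              · rw [h2]; exact Bmem_rate A s.1
            · intro p hp
              rcases hUc with ⟨_, hnone⟩ | ⟨p₀, hp₀, hcase⟩
              · rw [hnone] at hp; simp at hp
              · have hN0 := hN₂.2.2 p₀ (by simp [hp₀])
                rcases hcase with hsome | hsome
                · rw [hsome] at hp
                  have : p = p₀ := by simpa using (Option.mem_def.mp hp).symm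
                  subst this
                  exact hN0
                · rw [hsome] at hp
                  have hpe : p = (p₀.1 + ((A.rate s.1 : ℝ) - p₀.2) * a (j+1), (A.rate s.1 : ℝ)) := by
                    simpa using (Option.mem_def.mp hp).symm
                  subst hpe
                  exact ⟨Lmem_diff_mul hN0.1 (Bmem_rate A s.1) hN0.2 (hLa (j+1) (by omega)),
                    Bmem_rate A s.1⟩
          · intro w hw
            rw [hrepr w hw]
            obtain ⟨y₀, hy₀⟩ := hne₂ w hw
            exact ⟨y₀ + (A.rate s.1 : ℝ) * (w - w), mem_Uker_of ⟨le_rfl, hw.2⟩ hy₀⟩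
          · show cm + ct ∈ evalI d s.2
            rw [hrepr s.2 hmemr]
            refine ⟨s.2 + t, ⟨by linarith, hmem₂.2⟩, ?_⟩
            have hcc : cm + ct - (A.rate s.1 : ℝ) * (s.2 + t - s.2) = ct := by
              rw [hcost]; ring
            rw [hcc]
            exact hcin₂
          · intro w hw y hy
            rw [hrepr w hw] at hy
            obtain ⟨w₂, hw₂I, hy₂⟩ := hy
            exact hmkpath w hw w₂ ⟨lt_of_lt_of_le hw.1 hw₂I.1, hw₂I.2⟩ hw₂I.1 y hy₂
        | top =>
          have hZ₂' : ZeroSl d₂ := hZ₂ rfl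
          obtain ⟨d, hrepr, hla, hlb, hUc⟩ :=
            repr_sametop (A.rate s.1 : ℝ) hρ d₂ (a n) hZ₂' hne₂
          refine ⟨d, ?_, ?_, ?_, ?_, ?_⟩
          · refine ⟨by rw [hla]; exact hN₂.1, by rw [hlb]; exact Bmem_zero A, ?_⟩
            intro p hp
            rcases hUc with ⟨_, hnone⟩ | ⟨p₀, hp₀, hcase⟩
            · rw [hnone] at hp; simp at hp
            · have hN0 := hN₂.2.2 p₀ (by simp [hp₀])
              rcases hcase with hnone | hsome
              · rw [hnone] at hp; simp at hp
              · rw [hsome] at hp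
                have hpe : p = (p₀.1, 0) := by simpa using (Option.mem_def.mp hp).symm
                subst hpe
                exact ⟨hN0.1, Bmem_zero A⟩
          · intro _
            refine ⟨hlb, ?_⟩
            intro p hp
            rcases hUc with ⟨_, hnone⟩ | ⟨p₀, hp₀, hcase⟩
            · rw [hnone] at hp; simp at hp
            · rcases hcase with hnone | hsome
              · rw [hnone] at hp; simp at hp
              · rw [hsome] at hp
                have hpe : p = (p₀.1, 0) := by simpa using (Option.mem_def.mp hp).symm
                subst hpe
                rfl
          · intro w hw
            rw [hrepr w hw]
            obtain ⟨y₀, hy₀⟩ := hne₂ w hw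
            exact ⟨y₀ + (A.rate s.1 : ℝ) * (w - w), mem_Uker_of Set.self_mem_Ici hy₀⟩
          · show cm + ct ∈ evalI d s.2
            rw [hrepr s.2 hmemr]
            refine ⟨s.2 + t, by simp [Set.mem_Ici]; linarith, ?_⟩
            have hcc : cm + ct - (A.rate s.1 : ℝ) * (s.2 + t - s.2) = ct := by
              rw [hcost]; ring
            rw [hcc]
            exact hcin₂
          · intro w hw y hy
            rw [hrepr w hw] at hy
            obtain ⟨w₂, hw₂I, hy₂⟩ := hy
            exact hmkpath w hw w₂ (show a n < w₂ from lt_of_lt_of_le (show a n < w from hw) (show w ≤ w₂ from hw₂I)) hw₂I y hy₂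
      · -- cross into a strictly higher region
        have hnotop : rg ≠ Reg.top := by
          intro h
          subst h
          have h1 := reg_idx_le hok₂
          have h2 : (Reg.top).idx n = 2 * n + 1 := rfl
          omega
        have hwle : ∀ w ∈ rg.carr a n, ∀ w₂ ∈ rg₂.carr a n, w ≤ w₂ :=
          fun w hw w₂ hw₂ => (regLT hmono hok hok₂ hlt w hw w₂ hw₂).le
        cases rg₂ with
        | pt j =>
          have hjn : j ≤ n := hok₂
          obtain ⟨d, hrepr, hla, hlb, hbl, hbh, hUc⟩ := repr_pt (A.rate s.1 : ℝ) d₂ (a j)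
          refine ⟨d, ?_, fun h => absurd h hnotop, ?_, ?_, ?_⟩
          · refine ⟨?_, by rw [hlb]; exact Bmem_rate A s.1, ?_⟩
            · rw [hla]
              exact Lmem_diff_mul hN₂.1 (Bmem_rate A s.1) hN₂.2.1 (hLa j hjn)
            · intro p hp
              rcases hUc with ⟨_, hnone⟩ | ⟨p₀, hp₀, hsome⟩
              · rw [hnone] at hp; simp at hp
              · have hN0 := hN₂.2.2 p₀ (by simp [hp₀])
                rw [hsome] at hp
                have hpe : p = (p₀.1 + ((A.rate s.1 : ℝ) - p₀.2) * a j, (A.rate s.1 : ℝ)) := by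
                  simpa using (Option.mem_def.mp hp).symm
                subst hpe
                exact ⟨Lmem_diff_mul hN0.1 (Bmem_rate A s.1) hN0.2 (hLa j hjn),
                  Bmem_rate A s.1⟩
          · intro w hw
            rw [hrepr w]
            obtain ⟨y₀, hy₀⟩ := hne₂ (a j) rfl
            exact ⟨y₀ + (A.rate s.1 : ℝ) * (a j - w), mem_Uker_of rfl hy₀⟩
          · show cm + ct ∈ evalI d s.2
            rw [hrepr s.2]
            refine ⟨s.2 + t, hmem₂, ?_⟩
            have hcc : cm + ct - (A.rate s.1 : ℝ) * (s.2 + t - s.2) = ct := by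
              rw [hcost]; ring
            rw [hcc]
            exact hcin₂
          · intro w hw y hy
            rw [hrepr w] at hy
            obtain ⟨w₂, hw₂I, hy₂⟩ := hy
            exact hmkpath w hw w₂ hw₂I (hwle w hw w₂ hw₂I) y hy₂
        | op j =>
          have hjn : j < n := hok₂
          obtain ⟨d, hrepr, hlb, hLc, hUc⟩ :=
            repr_crossop (A.rate s.1 : ℝ) d₂ (a j) (a (j + 1))
              (hmono j (j+1) (by omega) (by omega) (by omega)) hne₂
          refine ⟨d, ?_, fun h => absurd h hnotop, ?_, ?_, ?_⟩
          · refine ⟨?_, by rw [hlb]; exact Bmem_rate A s.1, ?_⟩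
            · rcases hLc with h1 | h1 | h1
              · rw [h1]; exact hN₂.1
              · rw [h1]
                exact Lmem_diff_mul hN₂.1 (Bmem_rate A s.1) hN₂.2.1 (hLa j (by omega))
              · rw [h1]
                exact Lmem_diff_mul hN₂.1 (Bmem_rate A s.1) hN₂.2.1 (hLa (j+1) (by omega))
            · intro p hp
              rcases hUc with ⟨_, hnone⟩ | ⟨p₀, hp₀, hcase⟩
              · rw [hnone] at hp; simp at hp
              · have hN0 := hN₂.2.2 p₀ (by simp [hp₀])
                rcases hcase with hsome | hsome | hsome <;> rw [hsome] at hp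
                · have hpe : p = (p₀.1, (A.rate s.1 : ℝ)) := by
                    simpa using (Option.mem_def.mp hp).symm
                  subst hpe
                  exact ⟨hN0.1, Bmem_rate A s.1⟩
                · have hpe : p = (p₀.1 + ((A.rate s.1 : ℝ) - p₀.2) * a j, (A.rate s.1 : ℝ)) := by
                    simpa using (Option.mem_def.mp hp).symm
                  subst hpe
                  exact ⟨Lmem_diff_mul hN0.1 (Bmem_rate A s.1) hN0.2 (hLa j (by omega)),
                    Bmem_rate A s.1⟩
                · have hpe : p = (p₀.1 + ((A.rate s.1 : ℝ) - p₀.2) * a (j+1), (A.rate s.1 : ℝ)) := by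
                    simpa using (Option.mem_def.mp hp).symm
                  subst hpe
                  exact ⟨Lmem_diff_mul hN0.1 (Bmem_rate A s.1) hN0.2 (hLa (j+1) (by omega)),
                    Bmem_rate A s.1⟩
          · intro w hw
            rw [hrepr w]
            obtain ⟨u, hu⟩ := reg_nonempty hmono (r := Reg.op j) hjn
            obtain ⟨y₀, hy₀⟩ := hne₂ u hu
            exact ⟨y₀ + (A.rate s.1 : ℝ) * (u - w), mem_Uker_of hu hy₀⟩
          · show cm + ct ∈ evalI d s.2
            rw [hrepr s.2]
            refine ⟨s.2 + t, hmem₂, ?_⟩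
            have hcc : cm + ct - (A.rate s.1 : ℝ) * (s.2 + t - s.2) = ct := by
              rw [hcost]; ring
            rw [hcc]
            exact hcin₂
          · intro w hw y hy
            rw [hrepr w] at hy
            obtain ⟨w₂, hw₂I, hy₂⟩ := hy
            exact hmkpath w hw w₂ hw₂I (hwle w hw w₂ hw₂I) y hy₂
        | top =>
          have hZ₂' : ZeroSl d₂ := hZ₂ rfl
          obtain ⟨d, hrepr, hla, hlb, hUc⟩ :=
            repr_crosstop (A.rate s.1 : ℝ) hρ d₂ (a n) hZ₂' hne₂
          refine ⟨d, ?_, fun h => absurd h hnotop, ?_, ?_, ?_⟩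
          · refine ⟨?_, by rw [hlb]; exact Bmem_rate A s.1, ?_⟩
            · rw [hla]
              refine Lmem_congr ?_ (Lmem_diff_mul hN₂.1 (Bmem_rate A s.1) (Bmem_zero A)
                (hLa n le_rfl))
              ring
            · intro p hp
              rcases hUc with ⟨_, hnone⟩ | ⟨p₀, hp₀, hcase⟩
              · rw [hnone] at hp; simp at hp
              · have hN0 := hN₂.2.2 p₀ (by simp [hp₀])
                rcases hcase with hnone | hsome
                · rw [hnone] at hp; simp at hp
                · rw [hsome] at hp
                  have hpe : p = (p₀.1, (A.rate s.1 : ℝ)) := by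
                    simpa using (Option.mem_def.mp hp).symm
                  subst hpe
                  exact ⟨hN0.1, Bmem_rate A s.1⟩
          · intro w hw
            rw [hrepr w]
            have hmemn : a n + 1 ∈ Set.Ioi (a n) := by simp
            obtain ⟨y₀, hy₀⟩ := hne₂ (a n + 1) hmemn
            exact ⟨y₀ + (A.rate s.1 : ℝ) * (a n + 1 - w), mem_Uker_of hmemn hy₀⟩
          · show cm + ct ∈ evalI d s.2
            rw [hrepr s.2]
            refine ⟨s.2 + t, hmem₂, ?_⟩
            have hcc : cm + ct - (A.rate s.1 : ℝ) * (s.2 + t - s.2) = ct := by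
              rw [hcost]; ring
            rw [hcc]
            exact hcin₂
          · intro w hw y hy
            rw [hrepr w] at hy
            obtain ⟨w₂, hw₂I, hy₂⟩ := hy
            exact hmkpath w hw w₂ hw₂I (hwle w hw w₂ hw₂I) y hy₂
    · -- discrete move
      obtain ⟨e, he, hsrc, htgt2, hgd, hv2, hinv2, hcost⟩ := hdsc
      have hc0 : cm = 0 := by rw [hcost, hdisc e he]; norm_num
      cases hre : e.reset with
      | false =>
        rw [hre] at hv2
        simp at hv2
        obtain ⟨d₂, hN, hZ, hne, hcin, hreal⟩ := ih htgt hmem rg hok (by rw [hv2]; exact hmemr)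
        · refine ⟨d₂, hN, hZ, hne, ?_, ?_⟩
          · have hcc : cm + ct = ct := by rw [hc0]; ring
            rw [hcc, ← hv2]
            exact hcin
          · intro w hw y hy
            obtain ⟨β, hβ, hpath₂⟩ := hreal w hw y hy
            refine ⟨β, hβ, ppath_step' (Or.inr ?_) hpath₂ (zero_add y)⟩
            refine ⟨e, he, hsrc, htgt2, ?_, ?_, ?_, ?_⟩
            · exact guard_region_invariant hmono (hcsg e he) hok hmemr hw hgd
            · show (s'.1, w).2 = if e.reset then 0 else (s.1, w).2
              rw [hre]
              simp
            · show PGuard.sat (A.Inv e.tgt) (s'.1, w).2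
              have hinv2' : PGuard.sat (A.Inv e.tgt) s.2 := by rw [← hv2]; exact hinv2
              exact guard_region_invariant hmono (hcsi e.tgt) hok hmemr hw hinv2'
            · show (0:ℝ) = (e.dcost : ℝ)
              rw [hdisc e he]
              norm_num
      | true =>
        rw [hre] at hv2
        simp at hv2
        have h0n : (Reg.pt 0).good n := Nat.zero_le n
        have hmem0 : s'.2 ∈ (Reg.pt 0).carr a n := by
          show s'.2 ∈ ({a 0} : Set ℝ)
          simp [hv2, h0]
        obtain ⟨d₂, hN, hZ2, hne, hcin, hreal⟩ := ih htgt hmem (Reg.pt 0) h0n hmem0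
        have hrepr : ∀ w : ℝ,
            evalI ⟨d₂.la - d₂.lb * a 0, 0, d₂.bl,
              d₂.hi.map (fun p => (p.1 - p.2 * a 0, 0)), d₂.bh⟩ w = evalI d₂ (a 0) := by
          intro w
          ext z
          simp only [evalI, Set.mem_setOf_eq]
          constructor
          · rintro ⟨hlo, hhi⟩
            refine ⟨by rw [show d₂.la - d₂.lb * a 0 = d₂.la - d₂.lb * a 0 - 0 * w by ring]; exact hlo, ?_⟩
            intro p hp
            have hd2 : d₂.hi = some p := Option.mem_def.mp hp
            have := hhi (p.1 - p.2 * a 0, 0) (by rw [hd2]; simp)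
            rw [show p.1 - p.2 * a 0 = p.1 - p.2 * a 0 - 0 * w by ring]
            exact this
          · rintro ⟨hlo, hhi⟩
            refine ⟨by rw [show d₂.la - d₂.lb * a 0 - 0 * w = d₂.la - d₂.lb * a 0 by ring]; exact hlo, ?_⟩
            intro p hp
            cases hd : d₂.hi with
            | none => rw [hd] at hp; simp at hp
            | some p₀ =>
              rw [hd] at hp
              have hpe : p = (p₀.1 - p₀.2 * a 0, 0) := by simpa using hp.symm
              subst hpe
              have := hhi p₀ (by simp [hd])
              show cmpB d₂.bh z ((p₀.1 - p₀.2 * a 0) - 0 * w)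
              rw [show (p₀.1 - p₀.2 * a 0) - 0 * w = p₀.1 - p₀.2 * a 0 by ring]
              exact this
        refine ⟨⟨d₂.la - d₂.lb * a 0, 0, d₂.bl,
          d₂.hi.map (fun p => (p.1 - p.2 * a 0, 0)), d₂.bh⟩, ?_, ?_, ?_, ?_, ?_⟩
        · refine ⟨?_, Bmem_zero A, ?_⟩
          · refine Lmem_congr ?_ (Lmem_diff_mul hN.1 (Bmem_zero A) hN.2.1 (hLa 0 (Nat.zero_le n)))
            ring
          · intro p hp
            simp only at hp
            cases hd : d₂.hi with
            | none => rw [hd] at hp; simp at hp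
            | some p₀ =>
              rw [hd] at hp
              have hpe : p = (p₀.1 - p₀.2 * a 0, 0) := by simpa using (Option.mem_def.mp hp).symm
              subst hpe
              have hN0 := hN.2.2 p₀ (by simp [hd])
              refine ⟨?_, Bmem_zero A⟩
              refine Lmem_congr ?_ (Lmem_diff_mul hN0.1 (Bmem_zero A) hN0.2 (hLa 0 (Nat.zero_le n)))
              ring
        · intro _
          refine ⟨rfl, ?_⟩
          intro p hp
          simp only at hp
          cases hd : d₂.hi with
          | none => rw [hd] at hp; simp at hp
          | some p₀ =>
            rw [hd] at hp
            have hpe : p = (p₀.1 - p₀.2 * a 0, 0) := by simpa using (Option.mem_def.mp hp).symm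
            subst hpe
            rfl
        · intro w hw
          rw [hrepr w]
          exact hne (a 0) rfl
        · show cm + ct ∈ _
          rw [hrepr s.2]
          have hcc : cm + ct = ct := by rw [hc0]; ring
          rw [hcc]
          have : s'.2 = a 0 := by rw [hv2, h0]
          rw [← this]
          exact hcin
        · intro w hw y hy
          rw [hrepr w] at hy
          obtain ⟨β, hβ, hpath₂⟩ := hreal (a 0) rfl y hy
          have hdm : DiscMove A (s.1, w) 0 (s'.1, a 0) := by
            refine ⟨e, he, hsrc, htgt2, ?_, ?_, ?_, ?_⟩
            · exact guard_region_invariant hmono (hcsg e he) hok hmemr hw hgd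
            · show (s'.1, a 0).2 = if e.reset then 0 else (s.1, w).2
              rw [hre]
              simp [h0]
            · show PGuard.sat (A.Inv e.tgt) (s'.1, a 0).2
              have heq2 : (s'.1, a 0).2 = s'.2 := by simp [hv2, h0]
              rw [heq2]
              exact hinv2
            · show (0:ℝ) = (e.dcost : ℝ)
              rw [hdisc e he]
              norm_num
          exact ⟨β, hβ, ppath_step' (Or.inr hdm) hpath₂ (zero_add y)⟩

/-! ### final assembly -/

abbrev Cand (Q : Type) := (ℤ × Option Q × Bool) × Option (ℤ × Option Q) × Bool

noncomputable def optR {Q : Type} [Fintype Q] (A : PTA Q) : Option Q → ℝ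
  | none => 0
  | some l => (A.rate l : ℝ)

noncomputable def dOf {Q : Type} [Fintype Q] (A : PTA Q) (g : ℕ) (c : Cand Q) : ID :=
  ⟨(c.1.1 : ℝ) / (g : ℝ), optR A c.1.2.1, c.1.2.2,
    c.2.1.map (fun p => ((p.1 : ℝ) / (g : ℝ), optR A p.2)), c.2.2⟩

noncomputable def emptyID : ID := ⟨0, 0, false, some (0, 0), false⟩

lemma evalI_empty (w : ℝ) : evalI emptyID w = ∅ := by
  ext z
  simp only [evalI, emptyID, Set.mem_setOf_eq, Set.mem_empty_iff_false, iff_false]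
  rintro ⟨hlo, hhi⟩
  have h1 : (0:ℝ) - 0 * w < z := hlo
  have h2 : z < (0:ℝ) - 0 * w := hhi (0, 0) (by simp)
  linarith

lemma Bmem_optR {Q : Type} [Fintype Q] (A : PTA Q) (o : Option Q) : Bmem A (optR A o) := by
  cases o with
  | none => exact Or.inl rfl
  | some l => exact Or.inr ⟨l, rfl⟩

lemma nice_dOf {Q : Type} [Fintype Q] (A : PTA Q) (g : ℕ) (c : Cand Q) :
    NiceD A g (dOf A g c) := by
  refine ⟨⟨c.1.1, rfl⟩, Bmem_optR A _, ?_⟩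
  intro p hp
  cases hc : c.2.1 with
  | none => rw [dOf] at hp; rw [hc] at hp; simp at hp
  | some pre =>
    rw [dOf] at hp; rw [hc] at hp
    have hpe : p = ((pre.1 : ℝ) / (g : ℝ), optR A pre.2) := by
      simpa using (Option.mem_def.mp hp).symm
    subst hpe
    exact ⟨⟨pre.1, rfl⟩, Bmem_optR A _⟩

lemma nice_empty {Q : Type} [Fintype Q] (A : PTA Q) (g : ℕ) : NiceD A g emptyID := by
  refine ⟨Lmem_zero g, Bmem_zero A, ?_⟩
  intro p hp
  have hpe : p = (0, 0) := by simpa [emptyID] using (Option.mem_def.mp hp).symm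
  subst hpe
  exact ⟨Lmem_zero g, Bmem_zero A⟩

lemma exists_cand {Q : Type} [Fintype Q] (A : PTA Q) (g : ℕ) {d : ID}
    (h : NiceD A g d) : ∃ cand : Cand Q, dOf A g cand = d := by
  obtain ⟨⟨z, hz⟩, hb, hhi⟩ := h
  have hlb : ∃ o : Option Q, optR A o = d.lb := by
    rcases hb with h | ⟨l, h⟩
    · exact ⟨none, h.symm⟩
    · exact ⟨some l, h.symm⟩
  obtain ⟨o1, ho1⟩ := hlb
  cases hd : d.hi with
  | none =>
    refine ⟨((z, o1, d.bl), none, d.bh), ?_⟩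
    rcases d with ⟨la, lb, bl, hi, bh⟩
    simp only [dOf, Option.map_none] at *
    rw [ID.mk.injEq]
    exact ⟨hz.symm, ho1, rfl, hd ▸ rfl, rfl⟩
  | some p =>
    obtain ⟨⟨z', hz'⟩, hb'⟩ := hhi p (by simp [hd])
    have hub : ∃ o : Option Q, optR A o = p.2 := by
      rcases hb' with h | ⟨l, h⟩
      · exact ⟨none, h.symm⟩
      · exact ⟨some l, h.symm⟩
    obtain ⟨o2, ho2⟩ := hub
    refine ⟨((z, o1, d.bl), some (z', o2), d.bh), ?_⟩
    rcases d with ⟨la, lb, bl, hi, bh⟩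
    simp only [dOf, Option.map_some] at *
    rw [ID.mk.injEq]
    refine ⟨hz.symm, ho1, rfl, ?_, rfl⟩
    rw [hd]
    congr 1
    exact Prod.ext hz'.symm ho2

def shOf (d : ID) : IShape :=
  d.hi.elim (if d.bl then IShape.ci else IShape.oi)
    (fun _ => if d.bl then (if d.bh then IShape.cc else IShape.co)
              else (if d.bh then IShape.oc else IShape.oo))

noncomputable def hiA (d : ID) : ℝ := (d.hi.getD (0, 0)).1
noncomputable def hiB (d : ID) : ℝ := (d.hi.getD (0, 0)).2

lemma conv (d : ID) (x : ℝ) :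
    mkInterval (shOf d) (d.la - d.lb * x) (hiA d - hiB d * x) = evalI d x := by
  rcases d with ⟨la, lb, bl, hi, bh⟩
  cases hi with
  | none =>
    cases bl <;> ext z <;>
      simp [shOf, hiA, hiB, mkInterval, evalI, cmpB, Set.mem_Ici, Set.mem_Ioi]
  | some p =>
    cases bl <;> cases bh <;> ext z <;>
      simp [shOf, hiA, hiB, mkInterval, evalI, cmpB, Set.mem_Icc, Set.mem_Ico,
        Set.mem_Ioc, Set.mem_Ioo] <;>
      (try constructor) <;> (try tauto)

lemma regions_to_reg {a : ℕ → ℝ} {n : ℕ} {r : Set ℝ} (hr : r ∈ Regions a n) :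
    ∃ rg : Reg, rg.good n ∧ r = rg.carr a n := by
  rcases hr with ⟨i, hi, hr⟩ | ⟨i, hi, hr⟩ | hr
  · exact ⟨.pt i, hi, hr⟩
  · exact ⟨.op i, hi, hr⟩
  · exact ⟨.top, trivial, hr⟩

end S4

open S4

/-- **Corollary 4.** Fix locations `q, q'` and regions `r, r'` w.r.t. the
constants `a 0 < … < a n` (which contain all guard constants of `A`, a one-clock PTA with
all discrete costs 0, and are integral multiples of `1/g` for some power `g` of the lcm
`C` of the positive cost rates). Then the set of costs of paths of `TTS_A` from `(q, x)`
(with `x ∈ r`) to some `(q', β)` with `β ∈ r'` is of the form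
`⋃ m, ⟨α m − βl m · x, α' m − βr m · x⟩`, where every `α m`, `α' m` is an integral multiple
of `1/g` (or the interval is right-unbounded, i.e. `α' m = +∞`), every `βl m`, `βr m` is
either `0` or a cost rate of `A`, and if `r = (a n, +∞)` then `βl m = βr m = 0`. -/
theorem stmt4 {Q : Type} [Fintype Q] (A : PTA Q)
    (hdisc : ∀ e ∈ A.E, e.dcost = 0)
    (g : ℕ) (hg : ∃ k : ℕ, g = posLcm A ^ k)
    (n : ℕ) (a : ℕ → ℝ) (h0 : a 0 = 0)
    (hmono : ∀ i j : ℕ, i ≤ n → j ≤ n → i < j → a i < a j)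
    (hconsts : ∀ c ∈ PTA.consts A, ∃ i ≤ n, a i = (c : ℝ))
    (hmult : ∀ i ≤ n, ∃ k : ℕ, a i = (k : ℝ) / (g : ℝ))
    (q q' : Q) (r r' : Set ℝ) (hr : r ∈ Regions a n) (hr' : r' ∈ Regions a n) :
    ∃ (sh : ℕ → IShape) (α α' βl βr : ℕ → ℝ),
      (∀ m : ℕ, ∃ z : ℤ, α m = (z : ℝ) / (g : ℝ)) ∧
      (∀ m : ℕ, sh m = IShape.ci ∨ sh m = IShape.oi ∨ ∃ z : ℤ, α' m = (z : ℝ) / (g : ℝ)) ∧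
      (∀ m : ℕ, βl m = 0 ∨ ∃ l : Q, βl m = (A.rate l : ℝ)) ∧
      (∀ m : ℕ, βr m = 0 ∨ ∃ l : Q, βr m = (A.rate l : ℝ)) ∧
      (r = Set.Ioi (a n) → ∀ m : ℕ, βl m = 0 ∧ βr m = 0) ∧
      (∀ x ∈ r, {c : ℝ | ∃ β ∈ r', PPath A (q, x) c (q', β)} =
        ⋃ m : ℕ, mkInterval (sh m) (α m - βl m * x) (α' m - βr m * x)) := by

  classical
  obtain ⟨rg, hok, hreq⟩ := regions_to_reg hr
  obtain ⟨rg', hok', hreq'⟩ := regions_to_reg hr'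
  haveI : Nonempty (Cand Q) := ⟨((0, none, true), none, true)⟩
  obtain ⟨f, hf⟩ := exists_surjective_nat (Cand Q)
  set S : ℝ → Set ℝ := fun x => {c : ℝ | ∃ β ∈ r', PPath A (q, x) c (q', β)} with hS
  set soundC : Cand Q → Prop := fun cand =>
    (∀ x ∈ r, ∀ y ∈ evalI (dOf A g cand) x, y ∈ S x) ∧
    (r = Set.Ioi (a n) → (dOf A g cand).lb = 0 ∧ ∀ p ∈ (dOf A g cand).hi, p.2 = 0)
    with hsoundC
  set D : ℕ → ID := fun m => if soundC (f m) then dOf A g (f m) else emptyID with hD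
  have hND : ∀ m, NiceD A g (D m) := by
    intro m
    simp only [hD]
    by_cases h : soundC (f m)
    · rw [if_pos h]; exact nice_dOf A g (f m)
    · rw [if_neg h]; exact nice_empty A g
  have hTopZ : r = Set.Ioi (a n) → ∀ m, (D m).lb = 0 ∧ ∀ p ∈ (D m).hi, p.2 = 0 := by
    intro hrtop m
    simp only [hD]
    by_cases h : soundC (f m)
    · rw [if_pos h]; exact h.2 hrtop
    · rw [if_neg h]
      refine ⟨rfl, ?_⟩
      intro p hp
      have hpe : p = (0, 0) := by simpa [emptyID] using (Option.mem_def.mp hp).symm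
      subst hpe
      rfl
  refine ⟨fun m => shOf (D m), fun m => (D m).la, fun m => hiA (D m),
    fun m => (D m).lb, fun m => hiB (D m), ?_, ?_, ?_, ?_, ?_, ?_⟩
  · exact fun m => (hND m).1
  · intro m
    cases hd : (D m).hi with
    | none =>
      cases hbl : (D m).bl with
      | true => left; simp [shOf, hd, hbl]
      | false => right; left; simp [shOf, hd, hbl]
    | some p =>
      right; right
      have := ((hND m).2.2 p (by simp [hd])).1
      obtain ⟨z, hz⟩ := this
      exact ⟨z, by simp only [hiA, hd, Option.getD_some]; exact hz⟩
  · exact fun m => (hND m).2.1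
  · intro m
    cases hd : (D m).hi with
    | none => left; simp [hiB, hd]
    | some p =>
      have := ((hND m).2.2 p (by simp [hd])).2
      simp only [hiB, hd, Option.getD_some]
      exact this
  · intro hrtop m
    obtain ⟨h1, h2⟩ := hTopZ hrtop m
    refine ⟨h1, ?_⟩
    cases hd : (D m).hi with
    | none => simp [hiB, hd]
    | some p =>
      simp only [hiB, hd, Option.getD_some]
      exact h2 p (by simp [hd])
  · intro x hx
    ext cval
    simp only [Set.mem_iUnion]
    constructor
    · intro hc
      obtain ⟨β, hβ, hpath⟩ := hc
      have hmemr : x ∈ rg.carr a n := by rw [← hreq]; exact hx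
      have hmem' : β ∈ Reg.carr a n rg' := by rw [← hreq']; exact hβ
      obtain ⟨d, hN, hZ, hne, hcin, hreal⟩ :=
        core A hdisc h0 hmono hconsts g hmult q' rg' hok' hpath rfl hmem' rg hok hmemr
      obtain ⟨cand, hcand⟩ := exists_cand A g hN
      have hsound : soundC cand := by
        rw [hsoundC]
        constructor
        · intro x' hx' y hy
          rw [hcand] at hy
          obtain ⟨β', hβ', hp'⟩ := hreal x' (by rw [← hreq]; exact hx') y hy
          exact ⟨β', by rw [hreq']; exact hβ', hp'⟩
        · intro hrtop
          have hrgtop : rg = Reg.top := by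
            have hmem1 : a n + 1 ∈ rg.carr a n := by
              rw [← hreq, hrtop]; simp
            have hmem2 : a n + 1 ∈ (Reg.top).carr a n := by
              show a n + 1 ∈ Set.Ioi (a n); simp
            exact reg_eq_of_mem hmono hok trivial hmem1 hmem2
          obtain ⟨hz1, hz2⟩ := hZ hrgtop
          rw [hcand]
          exact ⟨hz1, hz2⟩
      obtain ⟨m, hm⟩ := hf cand
      refine ⟨m, ?_⟩
      have hDm : D m = d := by
        simp only [hD]
        rw [hm, if_pos hsound, hcand]
      rw [conv, hDm]
      exact hcin
    · rintro ⟨m, hy⟩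
      rw [conv] at hy
      by_cases h : soundC (f m)
      · have hDm : D m = dOf A g (f m) := by simp only [hD]; rw [if_pos h]
        rw [hDm] at hy
        have := h.1 x hx cval hy
        rw [hS] at this
        exact this
      · have hDm : D m = emptyID := by simp only [hD]; rw [if_neg h]
        rw [hDm, evalI_empty] at hy
        exact absurd hy (Set.notMem_empty cval)
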